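/- arXiv:2401.09291 — 5 statements merged into one kernel-verified Lean document; each statement's English description precedes it below -/
import Mathlib

section
/- Let C be a skeletally small, idempotent complete additive category with weak kernels, and let X ⊆ C be a contravariantly finite additive subcategory. Then for every object C₀ of C, the restricted representable functor C(−, C₀)|_X is a finitely presented X-module; consequently the exact restriction functor Mod C → Mod X restricts to an exact functor mod C → mod X on finitely presented modules. -/
open CategoryTheory Limits

universe u

namespace Stmt1

/-- Finitely presented modules over a small preadditive category `D`. -/
def IsFinPres {D : Type u} [SmallCategory D] [Preadditive D] (M : Dᵒᵖ ⥤ AddCommGrpCat.{u}) : Prop :=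
  ∃ (A B : D) (q : preadditiveYoneda.obj A ⟶ preadditiveYoneda.obj B)
    (p : preadditiveYoneda.obj B ⟶ M),
      (∀ W : Dᵒᵖ, Function.Surjective (p.app W)) ∧
      (∀ W : Dᵒᵖ, Function.Exact (q.app W) (p.app W))

/-- The restriction functor on (all) modules, along `ι : X ⥤ C`. -/
def res {X C : Type u} [SmallCategory X] [SmallCategory C] (ι : X ⥤ C) :
    (Cᵒᵖ ⥤ AddCommGrpCat.{u}) ⥤ (Xᵒᵖ ⥤ AddCommGrpCat.{u}) :=
  (Functor.whiskeringLeft Xᵒᵖ Cᵒᵖ AddCommGrpCat.{u}).obj ι.op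

end Stmt1

open Stmt1

section Aux

set_option linter.unusedSectionVars false

lemma yoneda_app_eq {C : Type u} [SmallCategory C] [Preadditive C] {A : C}
    (N : Cᵒᵖ ⥤ AddCommGrpCat.{u}) (η : preadditiveYoneda.obj A ⟶ N) (W : C) (t : W ⟶ A) :
    η.app (Opposite.op W) t = N.map t.op (η.app (Opposite.op A) (𝟙 A)) := by
  have h : η.app (Opposite.op W) (t ≫ 𝟙 A) = N.map t.op (η.app (Opposite.op A) (𝟙 A)) :=
    NatTrans.naturality_apply η t.op (𝟙 A)
  simpa using h

lemma yoneda_hom_app_eq {C : Type u} [SmallCategory C] [Preadditive C] {A B : C}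
    (q : preadditiveYoneda.obj A ⟶ preadditiveYoneda.obj B) (W : Cᵒᵖ) (t : W.unop ⟶ A) :
    q.app W t = t ≫ (q.app (Opposite.op A) (𝟙 A) : A ⟶ B) :=
  yoneda_app_eq _ q W.unop t

variable {X C : Type u} [SmallCategory X] [SmallCategory C] [Preadditive X] [Preadditive C]
  (ι : X ⥤ C) [ι.Additive]

/-- For `d : ι.obj X₀ ⟶ D`, the natural transformation `X(−, X₀) ⟶ C(ι −, D)`. -/
def toRes {X₀ : X} {D : C} (d : ι.obj X₀ ⟶ D) :
    preadditiveYoneda.obj X₀ ⟶ (res ι).obj (preadditiveYoneda.obj D) where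
  app W := AddCommGrpCat.ofHom
    (AddMonoidHom.mk' (fun (t : W.unop ⟶ X₀) => ι.map t ≫ d)
      (fun s t => (congrArg (· ≫ d) (ι.map_add (f := s) (g := t))).trans (Preadditive.add_comp _ _ _ _ _ _)))
  naturality W W' f := by
    ext t
    exact congrArg (· ≫ d) (ι.map_comp f.unop t) |>.trans (Category.assoc _ _ _)

@[simp] lemma toRes_app {X₀ : X} {D : C} (d : ι.obj X₀ ⟶ D) (W : Xᵒᵖ) (t : W.unop ⟶ X₀) :
    (toRes ι d).app W t = ι.map t ≫ d := rfl

end Aux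

theorem stmt1 {X C : Type u} [SmallCategory X] [SmallCategory C] [Preadditive X]
    [Preadditive C] [IsIdempotentComplete C]
    -- `C` has weak kernels:
    (hwk : ∀ (A B : C) (b : A ⟶ B), ∃ (W : C) (a : W ⟶ A), a ≫ b = 0 ∧
      ∀ (T : C) (t : T ⟶ A), t ≫ b = 0 → ∃ u : T ⟶ W, u ≫ a = t)
    (ι : X ⥤ C) [ι.Additive] [ι.Full] [ι.Faithful]
    -- `X` is closed under finite direct sums and direct summands in `C`:
    (hsum : ∀ A B : X, ∃ (bc : BinaryBicone (ι.obj A) (ι.obj B)) (_ : Nonempty bc.IsBilimit)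
      (Z : X), Nonempty (ι.obj Z ≅ bc.pt))
    (hsummand : ∀ (A : X) (Z : C) (i : Z ⟶ ι.obj A) (p : ι.obj A ⟶ Z), i ≫ p = 𝟙 Z →
      ∃ B : X, Nonempty (ι.obj B ≅ Z))
    -- `X` is contravariantly finite in `C`:
    (hcf : ∀ Cc : C, ∃ (X₀ : X) (x : ι.obj X₀ ⟶ Cc),
      ∀ (X' : X) (f : ι.obj X' ⟶ Cc), ∃ g : X' ⟶ X₀, ι.map g ≫ x = f) :
    -- restricted representables are finitely presented:
    (∀ C₀ : C, IsFinPres ((res ι).obj (preadditiveYoneda.obj C₀))) ∧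
    -- restriction preserves finite presentation:
    (∀ M : Cᵒᵖ ⥤ AddCommGrpCat.{u}, IsFinPres M → IsFinPres ((res ι).obj M)) ∧
    -- the restriction functor is exact:
    Nonempty (PreservesFiniteLimits (res ι)) ∧
    Nonempty (PreservesFiniteColimits (res ι)) := by
  -- main part: restriction preserves finite presentation
  have key : ∀ M : Cᵒᵖ ⥤ AddCommGrpCat.{u}, IsFinPres M → IsFinPres ((res ι).obj M) := by
    rintro M ⟨A, B, q, p, hp, hq⟩
    set k : A ⟶ B := q.app (Opposite.op A) (𝟙 A) with hkdef
    have hk : ∀ (W : Cᵒᵖ) (t : W.unop ⟶ A), q.app W t = t ≫ k :=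
      fun W t => yoneda_hom_app_eq q W t
    obtain ⟨XB, xB, hxB⟩ := hcf B
    obtain ⟨XA, xA, hxA⟩ := hcf A
    obtain ⟨bc, -, Z, ⟨e⟩⟩ := hsum XA XB
    set iA : XA ⟶ Z := ι.preimage (bc.inl ≫ e.inv) with hiA
    set iB : XB ⟶ Z := ι.preimage (bc.inr ≫ e.inv) with hiB
    set pA : Z ⟶ XA := ι.preimage (e.hom ≫ bc.fst) with hpA
    set pB : Z ⟶ XB := ι.preimage (e.hom ≫ bc.snd) with hpB
    have hAA : iA ≫ pA = 𝟙 XA := ι.map_injective (by simp [hiA, hpA, ι.map_comp])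
    have hAB : iA ≫ pB = 0 := ι.map_injective (by simp [hiA, hpB, ι.map_comp])
    have hBA : iB ≫ pA = 0 := ι.map_injective (by simp [hiB, hpA, ι.map_comp])
    have hBB : iB ≫ pB = 𝟙 XB := ι.map_injective (by simp [hiB, hpB, ι.map_comp])
    set w : ι.obj Z ⟶ B := ι.map pA ≫ (xA ≫ k) - ι.map pB ≫ xB with hw
    obtain ⟨K, a₀, ha₀, hK⟩ := hwk _ _ w
    obtain ⟨XK, xK, hxK⟩ := hcf K
    set g : XK ⟶ Z := ι.preimage (xK ≫ a₀) with hg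
    have hgmap : ι.map g = xK ≫ a₀ := ι.map_preimage _
    set h : XK ⟶ XB := g ≫ pB with hh
    have haw : a₀ ≫ ι.map pB ≫ xB = a₀ ≫ ι.map pA ≫ xA ≫ k := by
      have h0 := ha₀
      rw [hw, Preadditive.comp_sub, sub_eq_zero] at h0
      simpa only [Category.assoc] using h0.symm
    refine ⟨XK, XB, preadditiveYoneda.map h, toRes ι xB ≫ (res ι).map p, ?_, ?_⟩
    · -- surjectivity
      intro W m
      obtain ⟨f, hf⟩ := hp (Opposite.op (ι.obj W.unop)) m
      obtain ⟨t, ht⟩ := hxB W.unop f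
      refine ⟨t, ?_⟩
      show p.app _ ((toRes ι xB).app W t) = m
      rw [toRes_app, ht]
      exact hf
    · -- exactness
      intro W t
      change W.unop ⟶ XB at t
      constructor
      · -- kernel ⊆ image
        intro ht0
        have ht0' : p.app (Opposite.op (ι.obj W.unop)) (ι.map t ≫ xB) = 0 := ht0
        obtain ⟨a, hax⟩ := (hq (Opposite.op (ι.obj W.unop)) (ι.map t ≫ xB)).mp ht0'
        rw [hk _ a] at hax
        obtain ⟨a', ha'⟩ := hxA W.unop a
        set z : W.unop ⟶ Z := a' ≫ iA + t ≫ iB with hz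
        have h1 : z ≫ pA = a' := by
          simp [hz, Preadditive.add_comp, Category.assoc, hAA, hAB, hBA, hBB]
        have h2 : z ≫ pB = t := by
          simp [hz, Preadditive.add_comp, Category.assoc, hAA, hAB, hBA, hBB]
        have hzw : ι.map z ≫ w = 0 := by
          rw [hw, Preadditive.comp_sub, ← ι.map_comp_assoc, ← ι.map_comp_assoc, h1, h2,
            ← Category.assoc, ha', hax, sub_self]
        obtain ⟨v, hv⟩ := hK _ (ι.map z) hzw
        obtain ⟨v', hv'⟩ := hxK W.unop v
        refine ⟨v', ?_⟩
        show v' ≫ h = t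
        apply ι.map_injective
        calc ι.map (v' ≫ h) = (ι.map v' ≫ xK) ≫ a₀ ≫ ι.map pB := by
              rw [hh, ι.map_comp, ι.map_comp, hgmap]; simp only [Category.assoc]
          _ = v ≫ a₀ ≫ ι.map pB := by rw [hv']
          _ = ι.map z ≫ ι.map pB := by rw [← Category.assoc, hv]
          _ = ι.map (z ≫ pB) := (ι.map_comp _ _).symm
          _ = ι.map t := by rw [h2]
      · -- image ⊆ kernel
        rintro ⟨(s : W.unop ⟶ XK), rfl⟩
        show p.app _ ((toRes ι xB).app W (s ≫ h)) = 0
        rw [toRes_app]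
        have hrw : ι.map (s ≫ h) ≫ xB
            = (ι.map s ≫ xK ≫ a₀ ≫ ι.map pA ≫ xA) ≫ k := by
          rw [hh, ι.map_comp, ι.map_comp, hgmap]
          simp only [Category.assoc]
          rw [haw]
        rw [hrw, ← hk]
        exact (hq (Opposite.op (ι.obj W.unop))).apply_apply_eq_zero _
  have hfl : PreservesFiniteLimits (res ι) := by
    have h1 : PreservesLimitsOfSize.{0, 0} ((Functor.whiskeringLeft Xᵒᵖ Cᵒᵖ AddCommGrpCat.{u}).obj ι.op) :=
      inferInstance
    have h2 : PreservesLimitsOfSize.{0, 0} (res ι) := h1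
    exact PreservesLimitsOfSize.preservesFiniteLimits _
  have hfc : PreservesFiniteColimits (res ι) := by
    have h1 : PreservesColimitsOfSize.{0, 0} ((Functor.whiskeringLeft Xᵒᵖ Cᵒᵖ AddCommGrpCat.{u}).obj ι.op) :=
      inferInstance
    have h2 : PreservesColimitsOfSize.{0, 0} (res ι) := h1
    exact PreservesColimitsOfSize.preservesFiniteColimits _
  refine ⟨?_, key, ⟨hfl⟩, ⟨hfc⟩⟩
  intro C₀
  apply key
  refine ⟨C₀, C₀, 0, 𝟙 _, fun W m => ⟨m, rfl⟩, ?_⟩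
  intro W t
  constructor
  · intro ht
    have ht' : t = 0 := by simpa using ht
    exact ⟨0, by simp [ht']⟩
  · rintro ⟨s, rfl⟩
    simp only [NatTrans.id_app, zero_app]
    rfl
end

section
/- Let C be a skeletally small, idempotent complete additive category with weak kernels, and X ⊆ C a contravariantly finite additive subcategory. Then the adjoint pair (L, restriction) between Mod C and Mod X restricts to an adjoint pair of functors between the categories mod C and mod X of finitely presented modules, with L fully faithful. -/
/-!
STATEMENT 3: Let `C` be a skeletally small, idempotent complete additive category with weak
kernels, and `X ⊆ C` a contravariantly finite additive subcategory. Then the adjoint pair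
`(L, restriction)` between `Mod C` and `Mod X` restricts to an adjoint pair of functors
between the categories `mod C` and `mod X` of finitely presented modules, with `L` fully
faithful.
-/

open CategoryTheory Limits

universe u

namespace Stmt3

/-- Finitely presented modules over a small preadditive category `D`. -/
def IsFinPres {D : Type u} [SmallCategory D] [Preadditive D] (M : Dᵒᵖ ⥤ AddCommGrpCat.{u}) : Prop :=
  ∃ (A B : D) (q : preadditiveYoneda.obj A ⟶ preadditiveYoneda.obj B)
    (p : preadditiveYoneda.obj B ⟶ M),
      (∀ W : Dᵒᵖ, Function.Surjective (p.app W)) ∧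
      (∀ W : Dᵒᵖ, Function.Exact (q.app W) (p.app W))

/-- The restriction functor on modules, along `ι : X ⥤ C`. -/
def res {X C : Type u} [SmallCategory X] [SmallCategory C] (ι : X ⥤ C) :
    (Cᵒᵖ ⥤ AddCommGrpCat.{u}) ⥤ (Xᵒᵖ ⥤ AddCommGrpCat.{u}) :=
  (Functor.whiskeringLeft Xᵒᵖ Cᵒᵖ AddCommGrpCat.{u}).obj ι.op

end Stmt3

open Stmt3

namespace Stmt3Aux

set_option linter.unusedSectionVars false
open Opposite ZeroObject

section
variable {X C : Type u} [SmallCategory X] [SmallCategory C] [Preadditive X] [Preadditive C]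
variable (ι : X ⥤ C) [ι.Additive] [ι.Full] [ι.Faithful]

lemma comp_app' {M : Cᵒᵖ ⥤ AddCommGrpCat.{u}} {c d e : Cᵒᵖ} (f : c ⟶ d) (g : d ⟶ e)
    (m : M.obj c) : M.map (f ≫ g) m = M.map g (M.map f m) := by
  rw [M.map_comp]; rfl

lemma yoneda_hom_app {D : Type u} [SmallCategory D] [Preadditive D] {A B : D}
    (q : preadditiveYoneda.obj A ⟶ preadditiveYoneda.obj B) (W : Dᵒᵖ) (h : W.unop ⟶ A) :
    q.app W h = h ≫ q.app (op A) (𝟙 A) := by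
  have h2 := ConcreteCategory.congr_hom (q.naturality h.op) (𝟙 A)
  erw [comp_apply, comp_apply] at h2
  have h1 : (preadditiveYoneda.obj A).map h.op (𝟙 A) = h := Category.comp_id h
  rw [h1] at h2
  rw [h2]
  rfl

def yIota (A : X) : preadditiveYoneda.obj A ⟶ ι.op ⋙ preadditiveYoneda.obj (ι.obj A) where
  app x := AddCommGrpCat.ofHom (AddMonoidHom.mk' (fun g => ι.map g) (fun g g' => ι.map_add))
  naturality x y h := by
    ext g
    exact ι.map_comp h.unop g

section
variable (hsum : ∀ A B : X, ∃ (bc : BinaryBicone (ι.obj A) (ι.obj B)) (_ : Nonempty bc.IsBilimit)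
      (Z : X), Nonempty (ι.obj Z ≅ bc.pt))

/-- naturality of a transformation `yX A ⟶ ι.op ⋙ M` -/
lemma beta_nat (A : X) (M : Cᵒᵖ ⥤ AddCommGrpCat.{u}) (β : preadditiveYoneda.obj A ⟶ ι.op ⋙ M)
    {Z : X} (u : Z ⟶ A) : β.app (op Z) u = M.map (ι.map u).op (β.app (op A) (𝟙 A)) := by
  have h2 := ConcreteCategory.congr_hom (β.naturality u.op) (𝟙 A)
  erw [comp_apply, comp_apply] at h2
  have h4 : (preadditiveYoneda.obj A).map u.op (𝟙 A) = u := Category.comp_id u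
  rw [h4] at h2
  exact h2

include hsum in
lemma gamma_add (A : X) (M : Cᵒᵖ ⥤ AddCommGrpCat.{u}) (β : preadditiveYoneda.obj A ⟶ ι.op ⋙ M)
    {c : Cᵒᵖ} (h h' : c.unop ⟶ ι.obj A) :
    M.map (h + h').op (β.app (op A) (𝟙 A)) =
      M.map h.op (β.app (op A) (𝟙 A)) + M.map h'.op (β.app (op A) (𝟙 A)) := by
  obtain ⟨bc, -, Z, ⟨e⟩⟩ := hsum A A
  set m := β.app (op A) (𝟙 A) with hm
  set p₁ : Z ⟶ A := ι.preimage (e.hom ≫ bc.fst) with hp₁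
  set p₂ : Z ⟶ A := ι.preimage (e.hom ≫ bc.snd) with hp₂
  set gg : c.unop ⟶ ι.obj Z := (h ≫ bc.inl + h' ≫ bc.inr) ≫ e.inv with hgg
  have h1 : gg ≫ ι.map p₁ = h := by
    rw [hp₁, ι.map_preimage]
    simp [hgg]
  have h2 : gg ≫ ι.map p₂ = h' := by
    rw [hp₂, ι.map_preimage]
    simp [hgg]
  have h3 : gg ≫ ι.map (p₁ + p₂) = h + h' := by
    rw [ι.map_add, Preadditive.comp_add, h1, h2]
  have key : ∀ (w : c.unop ⟶ ι.obj A) (u : Z ⟶ A), gg ≫ ι.map u = w →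
      M.map w.op m = M.map gg.op (β.app (op Z) u) := by
    intro w u hw
    rw [beta_nat ι A M β u, ← hw]
    have h5 : ((gg ≫ ι.map u).op) = (ι.map u).op ≫ gg.op := rfl
    rw [h5, comp_app']
  erw [key _ _ h3, key _ _ h1, key _ _ h2, (β.app (op Z)).hom.map_add, (M.map gg.op).hom.map_add]

/-- The universal map out of `C(-, ιA)`. -/
def gammaOf (A : X) (M : Cᵒᵖ ⥤ AddCommGrpCat.{u}) (β : preadditiveYoneda.obj A ⟶ ι.op ⋙ M) :
    preadditiveYoneda.obj (ι.obj A) ⟶ M where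
  app c := AddCommGrpCat.ofHom (AddMonoidHom.mk' (fun h => M.map h.op (β.app (op A) (𝟙 A)))
    (fun h h' => gamma_add ι hsum A M β h h'))
  naturality c d f := by
    ext (h : c.unop ⟶ ι.obj A)
    show M.map (f.unop ≫ h).op _ = M.map f (M.map h.op _)
    rw [← comp_app']
    rfl

lemma gammaOf_fac (A : X) (M : Cᵒᵖ ⥤ AddCommGrpCat.{u})
    (β : preadditiveYoneda.obj A ⟶ ι.op ⋙ M) :
    yIota ι A ≫ Functor.whiskerLeft ι.op (gammaOf ι hsum A M β) = β := by
  ext x (g : x.unop ⟶ A)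
  show M.map (ι.map g).op (β.app (op A) (𝟙 A)) = β.app x g
  exact (beta_nat ι A M β g).symm

noncomputable def eIso (A : X) :
    (ι.op.lan (H := AddCommGrpCat.{u})).obj (preadditiveYoneda.obj A) ≅
      preadditiveYoneda.obj (ι.obj A) where
  hom := Functor.descOfIsLeftKanExtension _ (ι.op.lanUnit.app (preadditiveYoneda.obj A)) _
    (yIota ι A)
  inv := gammaOf ι hsum A _ (ι.op.lanUnit.app (preadditiveYoneda.obj A))
  hom_inv_id := by
    apply Functor.hom_ext_of_isLeftKanExtension _ (ι.op.lanUnit.app (preadditiveYoneda.obj A))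
    rw [Functor.whiskerLeft_comp, ← Category.assoc,
      Functor.descOfIsLeftKanExtension_fac _ (ι.op.lanUnit.app (preadditiveYoneda.obj A)),
      gammaOf_fac, Functor.whiskerLeft_id', Category.comp_id]
  inv_hom_id := by
    ext c (h : c.unop ⟶ ι.obj A)
    set Ln := ι.op.lan.obj (preadditiveYoneda.obj A)
    set un := ι.op.lanUnit.app (preadditiveYoneda.obj A)
    set ds := Ln.descOfIsLeftKanExtension un (preadditiveYoneda.obj (ι.obj A)) (yIota ι A)
    show ds.app c (Ln.map h.op (un.app (op A) (𝟙 A))) = _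
    have h1 := ConcreteCategory.congr_hom (ds.naturality h.op) (un.app (op A) (𝟙 A))
    simp only [comp_apply] at h1
    rw [h1]
    have h2 := ConcreteCategory.congr_hom
      (Ln.descOfIsLeftKanExtension_fac_app un (preadditiveYoneda.obj (ι.obj A)) (yIota ι A)
        (op A)) (𝟙 A)
    erw [comp_apply] at h2
    have h3 : ds.app (op (ι.obj A)) (un.app (op A) (𝟙 A)) = 𝟙 (ι.obj A) :=
      h2.trans (ι.map_id A)
    rw [h3]
    show h ≫ 𝟙 (ι.obj A) = _
    rw [Category.comp_id]
    rfl

lemma eIso_fac_app (A : X) (x : Xᵒᵖ) (g : x.unop ⟶ A) :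
    (eIso ι hsum A).hom.app (ι.op.obj x)
      ((ι.op.lanUnit.app (preadditiveYoneda.obj A)).app x g) = ι.map g := by
  have h2 := ConcreteCategory.congr_hom
    ((ι.op.lan.obj (preadditiveYoneda.obj A)).descOfIsLeftKanExtension_fac_app
      (ι.op.lanUnit.app (preadditiveYoneda.obj A)) (preadditiveYoneda.obj (ι.obj A))
      (yIota ι A) x) g
  erw [comp_apply] at h2
  exact h2

lemma eIso_natural {A B : X} (f : A ⟶ B) :
    (ι.op.lan (H := AddCommGrpCat.{u})).map (preadditiveYoneda.map f) ≫ (eIso ι hsum B).hom =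
      (eIso ι hsum A).hom ≫ preadditiveYoneda.map (ι.map f) := by
  apply Functor.hom_ext_of_isLeftKanExtension _ (ι.op.lanUnit.app (preadditiveYoneda.obj A))
  ext x (g : x.unop ⟶ A)
  have hnat := ι.op.lanUnit.naturality (preadditiveYoneda.map f)
  have hx := ConcreteCategory.congr_hom (NatTrans.congr_app hnat x) g
  simp only [NatTrans.comp_app, comp_apply, Functor.comp_map, Functor.id_map,
    Functor.whiskeringLeft_obj_map, Functor.whiskerLeft_app] at hx
  show (eIso ι hsum B).hom.app (ι.op.obj x)
      ((ι.op.lan.map (preadditiveYoneda.map f)).app (ι.op.obj x)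
        ((ι.op.lanUnit.app (preadditiveYoneda.obj A)).app x g)) =
    (preadditiveYoneda.map (ι.map f)).app (ι.op.obj x)
      ((eIso ι hsum A).hom.app (ι.op.obj x)
        ((ι.op.lanUnit.app (preadditiveYoneda.obj A)).app x g))
  have hx' : (ι.op.lan.map (preadditiveYoneda.map f)).app (ι.op.obj x)
      ((ι.op.lanUnit.app (preadditiveYoneda.obj A)).app x g) =
      (ι.op.lanUnit.app (preadditiveYoneda.obj B)).app x (g ≫ f) := hx.symm
  rw [hx', eIso_fac_app, eIso_fac_app]
  show ι.map (g ≫ f) = ι.map g ≫ ι.map f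
  exact ι.map_comp g f

lemma lemA' {E : Type u} [SmallCategory E] {F G M : E ⥤ AddCommGrpCat.{u}} (f : F ⟶ G) (g : G ⟶ M)
    (w : f ≫ g = 0) (hs : ∀ W, Function.Surjective (g.app W))
    (he : ∀ W, Function.Exact (f.app W) (g.app W)) :
    Nonempty (IsColimit (CokernelCofork.ofπ g w)) := by
  refine ⟨evaluationJointlyReflectsColimits _ fun W => ?_⟩
  refine (CokernelCofork.isColimitMapCoconeEquiv _ _).symm ?_
  have hw : f.app W ≫ g.app W = 0 := by rw [← NatTrans.comp_app, w]; rfl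
  let S' : ShortComplex AddCommGrpCat.{u} := ShortComplex.mk (f.app W) (g.app W) hw
  have hecat : S'.Exact := S'.ab_exact_iff_function_exact.2 (he W)
  have hepi : Epi S'.g := (AddCommGrpCat.epi_iff_surjective _).2 (hs W)
  exact ((S'.exact_and_epi_g_iff_g_is_cokernel).1 ⟨hecat, hepi⟩).some

lemma lemB' {E : Type u} [SmallCategory E] {F G M : E ⥤ AddCommGrpCat.{u}} (f : F ⟶ G) (g : G ⟶ M)
    (w : f ≫ g = 0) (hc : IsColimit (CokernelCofork.ofπ g w)) (W : E) :
    Function.Surjective (g.app W) ∧ Function.Exact (f.app W) (g.app W) := by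
  have hw : f.app W ≫ g.app W = 0 := by rw [← NatTrans.comp_app, w]; rfl
  let S' : ShortComplex AddCommGrpCat.{u} := ShortComplex.mk (f.app W) (g.app W) hw
  have hc' : IsColimit (CokernelCofork.ofπ S'.g S'.zero) :=
    CokernelCofork.mapIsColimit _ hc ((evaluation E AddCommGrpCat.{u}).obj W)
  obtain ⟨he, hepi⟩ := (S'.exact_and_epi_g_iff_g_is_cokernel).2 ⟨hc'⟩
  exact ⟨(AddCommGrpCat.epi_iff_surjective _).1 hepi, S'.ab_exact_iff_function_exact.1 he⟩

include hsum in
lemma part4 (N : Xᵒᵖ ⥤ AddCommGrpCat.{u}) (h : Stmt3.IsFinPres N) :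
    Stmt3.IsFinPres ((ι.op.lan (H := AddCommGrpCat.{u})).obj N) := by
  obtain ⟨A, B, q, p, hs, he⟩ := h
  set Lf := ι.op.lan (H := AddCommGrpCat.{u}) with hLf
  have w : q ≫ p = 0 := by
    ext W y
    simpa using (he W).apply_apply_eq_zero y
  obtain ⟨hcok⟩ := lemA' q p w hs he
  letI : PreservesColimitsOfSize.{u,u} Lf :=
    (ι.op.lanAdjunction AddCommGrpCat.{u}).leftAdjoint_preservesColimits
  have hI : IsInitial (Lf.obj 0) :=
    IsInitial.isInitialObj Lf _ (IsZero.isInitial (isZero_zero _))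
  letI : Lf.PreservesZeroMorphisms :=
    Functor.preservesZeroMorphisms_of_map_zero_object
      (hI.uniqueUpToIso (IsZero.isInitial (isZero_zero _)))
  have w2 : Lf.map q ≫ Lf.map p = 0 := by rw [← Lf.map_comp, w, Lf.map_zero]
  have hcok2 : IsColimit (CokernelCofork.ofπ (Lf.map p) w2) :=
    CokernelCofork.mapIsColimit _ hcok Lf
  have hpt := fun (W : Cᵒᵖ) => lemB' (Lf.map q) (Lf.map p) w2 hcok2 W
  set qt : A ⟶ B := q.app (op A) (𝟙 A) with hqt
  have hq : q = preadditiveYoneda.map qt := by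
    ext W (h' : W.unop ⟶ A)
    exact yoneda_hom_app q W h'
  set eA := eIso ι hsum A with heA
  set eB := eIso ι hsum B with heB
  have hsq : preadditiveYoneda.map (ι.map qt) = eA.inv ≫ Lf.map q ≫ eB.hom := by
    rw [hq, eIso_natural ι hsum, Iso.inv_hom_id_assoc]
  have hsqel : ∀ (W : Cᵒᵖ) (t : W.unop ⟶ ι.obj A),
      (preadditiveYoneda.map (ι.map qt)).app W t =
        eB.hom.app W ((Lf.map q).app W (eA.inv.app W t)) := by
    intro W t
    have := ConcreteCategory.congr_hom (NatTrans.congr_app hsq W) t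
    exact this
  have hBhi : ∀ (W : Cᵒᵖ) (t), eB.hom.app W (eB.inv.app W t) = t := by
    intro W t
    have := ConcreteCategory.congr_hom (NatTrans.congr_app eB.inv_hom_id W) t
    exact this
  have hBih : ∀ (W : Cᵒᵖ) (t), eB.inv.app W (eB.hom.app W t) = t := by
    intro W t
    have := ConcreteCategory.congr_hom (NatTrans.congr_app eB.hom_inv_id W) t
    exact this
  have hAih : ∀ (W : Cᵒᵖ) (t), eA.inv.app W (eA.hom.app W t) = t := by
    intro W t
    have := ConcreteCategory.congr_hom (NatTrans.congr_app eA.hom_inv_id W) t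
    exact this
  refine ⟨ι.obj A, ι.obj B, preadditiveYoneda.map (ι.map qt), eB.inv ≫ Lf.map p, ?_, ?_⟩
  · intro W m
    obtain ⟨t, ht⟩ := (hpt W).1 m
    refine ⟨eB.hom.app W t, ?_⟩
    show (Lf.map p).app W (eB.inv.app W (eB.hom.app W t)) = m
    rw [hBih]; exact ht
  · intro W y
    constructor
    · intro h0
      have h0' : (Lf.map p).app W (eB.inv.app W y) = 0 := h0
      obtain ⟨x, hx⟩ := ((hpt W).2 (eB.inv.app W y)).1 h0'
      refine ⟨eA.hom.app W x, ?_⟩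
      show (preadditiveYoneda.map (ι.map qt)).app W (eA.hom.app W x) = y
      erw [hsqel, hAih, hx, hBhi]
    · rintro ⟨t, rfl⟩
      show (Lf.map p).app W (eB.inv.app W ((preadditiveYoneda.map (ι.map qt)).app W t)) = 0
      erw [hsqel, hBih]
      exact (hpt W).2.apply_apply_eq_zero _

include hsum in
lemma part5
    (hwk : ∀ (A B : C) (b : A ⟶ B), ∃ (W : C) (a : W ⟶ A), a ≫ b = 0 ∧
      ∀ (T : C) (t : T ⟶ A), t ≫ b = 0 → ∃ u : T ⟶ W, u ≫ a = t)
    (hcf : ∀ Cc : C, ∃ (X₀ : X) (x : ι.obj X₀ ⟶ Cc),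
      ∀ (X' : X) (f : ι.obj X' ⟶ Cc), ∃ g : X' ⟶ X₀, ι.map g ≫ x = f)
    (M : Cᵒᵖ ⥤ AddCommGrpCat.{u}) (h : Stmt3.IsFinPres M) :
    Stmt3.IsFinPres (ι.op ⋙ M) := by
  obtain ⟨A, B, q, p, hs, he⟩ := h
  set qt : A ⟶ B := q.app (op A) (𝟙 A) with hqt
  have happ : ∀ (W : Cᵒᵖ) (t : W.unop ⟶ A), q.app W t = t ≫ qt :=
    fun W t => yoneda_hom_app q W t
  obtain ⟨B₀, xB, hxB⟩ := hcf B
  obtain ⟨Wk, wk, hwk0, hwklift⟩ := hwk (ι.obj B₀) B xB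
  obtain ⟨W₀, xW, hxW⟩ := hcf Wk
  obtain ⟨A₀, xA, hxA⟩ := hcf A
  set k : W₀ ⟶ B₀ := ι.preimage (xW ≫ wk) with hkdef
  have hik : ι.map k = xW ≫ wk := ι.map_preimage _
  obtain ⟨b, hb⟩ := hxB A₀ (xA ≫ qt)
  obtain ⟨bc, -, Z, ⟨e⟩⟩ := hsum A₀ W₀
  set pA : Z ⟶ A₀ := ι.preimage (e.hom ≫ bc.fst) with hpA
  set pW : Z ⟶ W₀ := ι.preimage (e.hom ≫ bc.snd) with hpW
  set iA : A₀ ⟶ Z := ι.preimage (bc.inl ≫ e.inv) with hiA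
  set iW : W₀ ⟶ Z := ι.preimage (bc.inr ≫ e.inv) with hiW
  have hiApA : iA ≫ pA = 𝟙 A₀ := ι.map_injective (by
    rw [ι.map_comp, ι.map_preimage, ι.map_preimage, ι.map_id]
    simp [bc.inl_fst])
  have hiApW : iA ≫ pW = 0 := ι.map_injective (by
    rw [ι.map_comp, ι.map_preimage, ι.map_preimage, ι.map_zero]
    simp [bc.inl_snd])
  have hiWpA : iW ≫ pA = 0 := ι.map_injective (by
    rw [ι.map_comp, ι.map_preimage, ι.map_preimage, ι.map_zero]
    simp [bc.inr_fst])
  have hiWpW : iW ≫ pW = 𝟙 W₀ := ι.map_injective (by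
    rw [ι.map_comp, ι.map_preimage, ι.map_preimage, ι.map_id]
    simp [bc.inr_snd])
  set u : Z ⟶ B₀ := pA ≫ b + pW ≫ k with hu
  have key : ∀ {T : X} (s₁ : T ⟶ A₀) (s₂ : T ⟶ W₀),
      (s₁ ≫ iA + s₂ ≫ iW) ≫ u = s₁ ≫ b + s₂ ≫ k := by
    intro T s₁ s₂
    simp only [hu, Preadditive.add_comp, Preadditive.comp_add, Category.assoc]
    rw [show iA ≫ pA ≫ b = b by rw [← Category.assoc, hiApA, Category.id_comp]]
    rw [show iA ≫ pW ≫ k = 0 by rw [← Category.assoc, hiApW, zero_comp]]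
    rw [show iW ≫ pA ≫ b = 0 by rw [← Category.assoc, hiWpA, zero_comp]]
    rw [show iW ≫ pW ≫ k = k by rw [← Category.assoc, hiWpW, Category.id_comp]]
    simp
  have hkxB : ι.map k ≫ xB = 0 := by rw [hik, Category.assoc, hwk0, Limits.comp_zero]
  let p' : preadditiveYoneda.obj B₀ ⟶ ι.op ⋙ M :=
    { app := fun x => AddCommGrpCat.ofHom (AddMonoidHom.mk' (fun g => p.app (ι.op.obj x) (ι.map g ≫ xB))
        (fun g g' => by
          show p.app (ι.op.obj x) (ι.map (g + g') ≫ xB) =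
            p.app (ι.op.obj x) (ι.map g ≫ xB) + p.app (ι.op.obj x) (ι.map g' ≫ xB)
          erw [ι.map_add, Preadditive.add_comp, (p.app _).hom.map_add]))
      naturality := fun x y f => by
        ext (g : x.unop ⟶ B₀)
        show p.app (ι.op.obj y) (ι.map (f.unop ≫ g) ≫ xB) =
          M.map (ι.op.map f) (p.app (ι.op.obj x) (ι.map g ≫ xB))
        have hnat := ConcreteCategory.congr_hom (p.naturality (ι.op.map f)) (ι.map g ≫ xB : ι.obj x.unop ⟶ B)
        erw [comp_apply, comp_apply] at hnat
        have harg : ι.map (f.unop ≫ g) ≫ xB =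
            (preadditiveYoneda.obj B).map (ι.op.map f) (ι.map g ≫ xB) := by
          show _ = ι.map f.unop ≫ (ι.map g ≫ xB)
          rw [ι.map_comp, Category.assoc]
        rw [harg, hnat] }
  refine ⟨Z, B₀, preadditiveYoneda.map u, p', ?_, ?_⟩
  · intro x m
    obtain ⟨hB, hhB⟩ := hs (ι.op.obj x) m
    obtain ⟨g, hg⟩ := hxB x.unop hB
    refine ⟨g, ?_⟩
    show p.app (ι.op.obj x) (ι.map g ≫ xB) = m
    rw [hg]; exact hhB
  · intro x
    refine fun (g : x.unop ⟶ B₀) => ?_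
    constructor
    · intro h0
      have h0' : p.app (ι.op.obj x) (ι.map g ≫ xB) = 0 := h0
      obtain ⟨α, hα⟩ := ((he (ι.op.obj x)) _).1 h0'
      erw [happ] at hα
      obtain ⟨s₁, hs₁⟩ := hxA x.unop α
      have hsub : ι.map (g - s₁ ≫ b) ≫ xB = 0 := by
        rw [ι.map_sub, Preadditive.sub_comp, ι.map_comp, Category.assoc, hb,
          ← Category.assoc, hs₁, hα, sub_self]
      obtain ⟨t, ht⟩ := hwklift _ _ hsub
      obtain ⟨s₂, hs₂⟩ := hxW x.unop t
      have hs₂k : s₂ ≫ k = g - s₁ ≫ b := ι.map_injective (by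
        rw [ι.map_comp, hik, ← Category.assoc, hs₂, ht])
      refine ⟨s₁ ≫ iA + s₂ ≫ iW, ?_⟩
      show (s₁ ≫ iA + s₂ ≫ iW) ≫ u = g
      rw [key, hs₂k]
      abel
    · rintro ⟨s, rfl⟩
      show p.app (ι.op.obj x) (ι.map (s ≫ u) ≫ xB) = 0
      have harg : ι.map (s ≫ u) ≫ xB = ((ι.map s ≫ ι.map pA) ≫ xA) ≫ qt := by
        erw [ι.map_comp, hu, ι.map_add, ι.map_comp, ι.map_comp, Category.assoc,
          Preadditive.add_comp, Category.assoc, Category.assoc, hkxB, Limits.comp_zero,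
          add_zero, hb]
        simp [Category.assoc]
      rw [harg, ← happ]
      exact (he (ι.op.obj x)).apply_apply_eq_zero _
end
end

end Stmt3Aux

theorem stmt3 {X C : Type u} [SmallCategory X] [SmallCategory C] [Preadditive X]
    [Preadditive C] [IsIdempotentComplete C]
    (hwk : ∀ (A B : C) (b : A ⟶ B), ∃ (W : C) (a : W ⟶ A), a ≫ b = 0 ∧
      ∀ (T : C) (t : T ⟶ A), t ≫ b = 0 → ∃ u : T ⟶ W, u ≫ a = t)
    (ι : X ⥤ C) [ι.Additive] [ι.Full] [ι.Faithful]
    (hsum : ∀ A B : X, ∃ (bc : BinaryBicone (ι.obj A) (ι.obj B)) (_ : Nonempty bc.IsBilimit)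
      (Z : X), Nonempty (ι.obj Z ≅ bc.pt))
    (hsummand : ∀ (A : X) (Z : C) (i : Z ⟶ ι.obj A) (p : ι.obj A ⟶ Z), i ≫ p = 𝟙 Z →
      ∃ B : X, Nonempty (ι.obj B ≅ Z))
    (hcf : ∀ Cc : C, ∃ (X₀ : X) (x : ι.obj X₀ ⟶ Cc),
      ∀ (X' : X) (f : ι.obj X' ⟶ Cc), ∃ g : X' ⟶ X₀, ι.map g ≫ x = f) :
    ∃ (L : (Xᵒᵖ ⥤ AddCommGrpCat.{u}) ⥤ (Cᵒᵖ ⥤ AddCommGrpCat.{u})),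
      Nonempty (L ⊣ res ι) ∧ L.Full ∧ L.Faithful ∧
      -- `L` sends finitely presented `X`-modules to finitely presented `C`-modules:
      (∀ N : Xᵒᵖ ⥤ AddCommGrpCat.{u}, IsFinPres N → IsFinPres (L.obj N)) ∧
      -- restriction sends finitely presented `C`-modules to finitely presented `X`-modules:
      (∀ M : Cᵒᵖ ⥤ AddCommGrpCat.{u}, IsFinPres M → IsFinPres ((res ι).obj M)) := by
  refine ⟨ι.op.lan (H := AddCommGrpCat.{u}), ⟨ι.op.lanAdjunction AddCommGrpCat.{u}⟩, ?_, ?_, ?_, ?_⟩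
  · exact ((ι.op.lanAdjunction AddCommGrpCat.{u}).fullyFaithfulLOfIsIsoUnit).full
  · exact ((ι.op.lanAdjunction AddCommGrpCat.{u}).fullyFaithfulLOfIsIsoUnit).faithful
  · exact fun N hN => Stmt3Aux.part4 ι hsum N hN
  · exact fun M hM => Stmt3Aux.part5 ι hsum hwk hcf M hM
end

section
/- Let C be a skeletally small triangulated category with split idempotents. If A → B → C₀ →^c ΣA and A' → B' → C₀' →^{c'} ΣA' are triangles in C such that the images Im(Yc) and Im(Yc') in mod C are isomorphic, then in the split Grothendieck group K₀^sp(C) one has [A] − [B] + [C₀] = [A'] − [B'] + [C₀']. -/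
/-!
STATEMENT 6: Let `C` be a skeletally small triangulated category with split idempotents.
If `A → B → C₀ →^c ΣA` and `A' → B' → C₀' →^{c'} ΣA'` are triangles in `C` such that the
images `Im(Yc)` and `Im(Yc')` in `mod C` are isomorphic, then in the split Grothendieck
group `K₀^sp(C)` one has `[A] − [B] + [C₀] = [A'] − [B'] + [C₀']`.
-/

open CategoryTheory Limits Pretriangulated

universe u

namespace Stmt6

variable (C : Type u) [SmallCategory C] [Preadditive C]

/-- The relations defining the split Grothendieck group: `[A] = [B]` for `A ≅ B`, and
`[S] = [A] + [B]` whenever `S` is a biproduct of `A` and `B`. -/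
def splitRel : Set (FreeAbelianGroup C) :=
  {x | ∃ A B : C, Nonempty (A ≅ B) ∧ x = FreeAbelianGroup.of A - FreeAbelianGroup.of B} ∪
  {x | ∃ (A B : C) (bc : BinaryBicone A B), Nonempty bc.IsBilimit ∧
        x = FreeAbelianGroup.of bc.pt - FreeAbelianGroup.of A - FreeAbelianGroup.of B}

/-- The split Grothendieck group `K₀^sp(C)`. -/
def K0sp := FreeAbelianGroup C ⧸ AddSubgroup.closure (splitRel C)

instance : AddCommGroup (K0sp C) :=
  QuotientAddGroup.Quotient.addCommGroup (AddSubgroup.closure (splitRel C))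

/-- The class `[A]^sp` of an object in the split Grothendieck group. -/
def clsSp (A : C) : K0sp C := QuotientAddGroup.mk (FreeAbelianGroup.of A)

end Stmt6

open CategoryTheory Limits Opposite
section
variable {C : Type u} [SmallCategory C] [Preadditive C]

lemma exists_fg {Z Z' Y Y' : C} (c : Y ⟶ Z) (c' : Y' ⟶ Z')
    (α : (image (preadditiveYoneda.map c) : Cᵒᵖ ⥤ AddCommGrpCat.{u}) ≅
      image (preadditiveYoneda.map c')) :
    ∃ (f : Y ⟶ Y') (g : Y' ⟶ Y), f ≫ g ≫ c = c ∧ g ≫ f ≫ c' = c' ∧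
      (∀ {X : C} (u : X ⟶ Y), u ≫ c = 0 → u ≫ f ≫ c' = 0) ∧
      (∀ {X : C} (u : X ⟶ Y'), u ≫ c' = 0 → u ≫ g ≫ c = 0) := by
  set η := preadditiveYoneda.map c with hη
  set η' := preadditiveYoneda.map c' with hη'
  set e := factorThruImage η with he
  set m := image.ι η with hm
  set e' := factorThruImage η' with he'
  set m' := image.ι η' with hm'
  -- basic element facts
  have hfac : ∀ {X : C} (u : X ⟶ Y), m.app (op X) (e.app (op X) u) = u ≫ c := by
    intro X u
    have h1 : (e ≫ m).app (op X) u = u ≫ c := by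
      rw [image.fac η]; rfl
    exact h1
  have hfac' : ∀ {X : C} (u : X ⟶ Y'), m'.app (op X) (e'.app (op X) u) = u ≫ c' := by
    intro X u
    have h1 : (e' ≫ m').app (op X) u = u ≫ c' := by
      rw [image.fac η']; rfl
    exact h1
  have hnat : ∀ {X W : C} (v : X ⟶ W) (u : W ⟶ Y),
      e.app (op X) (v ≫ u) = (image η).map v.op (e.app (op W) u) := by
    intro X W v u
    have h1 := elementwise_of% (e.naturality v.op)
    exact h1 u
  have hnat' : ∀ {X W : C} (v : X ⟶ W) (u : W ⟶ Y'),
      e'.app (op X) (v ≫ u) = (image η').map v.op (e'.app (op W) u) := by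
    intro X W v u
    have h1 := elementwise_of% (e'.naturality v.op)
    exact h1 u
  have hmnat : ∀ {X W : C} (v : X ⟶ W) (y : (image η).obj (op W)),
      v ≫ (m.app (op W) y) = m.app (op X) ((image η).map v.op y) := by
    intro X W v y
    have h1 := elementwise_of% (m.naturality v.op)
    exact (h1 y).symm
  have hmnat' : ∀ {X W : C} (v : X ⟶ W) (y : (image η').obj (op W)),
      v ≫ (m'.app (op W) y) = m'.app (op X) ((image η').map v.op y) := by
    intro X W v y
    have h1 := elementwise_of% (m'.naturality v.op)
    exact (h1 y).symm
  have hanat : ∀ {X W : C} (v : X ⟶ W) (y : (image η).obj (op W)),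
      α.hom.app (op X) ((image η).map v.op y) = (image η').map v.op (α.hom.app (op W) y) := by
    intro X W v y
    have h1 := elementwise_of% (α.hom.naturality v.op)
    exact h1 y
  have hbnat : ∀ {X W : C} (v : X ⟶ W) (y : (image η').obj (op W)),
      α.inv.app (op X) ((image η').map v.op y) = (image η).map v.op (α.inv.app (op W) y) := by
    intro X W v y
    have h1 := elementwise_of% (α.inv.naturality v.op)
    exact h1 y
  have hai : ∀ {X : Cᵒᵖ} (y : (image η).obj X), α.inv.app X (α.hom.app X y) = y := by
    intro X y
    have h1 := elementwise_of% (α.hom_inv_id_app X)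
    simpa using h1 y
  have hia : ∀ {X : Cᵒᵖ} (y : (image η').obj X), α.hom.app X (α.inv.app X y) = y := by
    intro X y
    have h1 := elementwise_of% (α.inv_hom_id_app X)
    simpa using h1 y
  set ξ := e.app (op Y) (𝟙 Y) with hξ
  set ξ' := e'.app (op Y') (𝟙 Y') with hξ'
  have hse : Function.Surjective (e'.app (op Y)) := by
    rw [← AddCommGrpCat.epi_iff_surjective]; infer_instance
  have hse' : Function.Surjective (e.app (op Y')) := by
    rw [← AddCommGrpCat.epi_iff_surjective]; infer_instance
  obtain ⟨(f : Y ⟶ Y'), hf⟩ := hse (α.hom.app (op Y) ξ)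
  obtain ⟨(g : Y' ⟶ Y), hg⟩ := hse' (α.inv.app (op Y') ξ')
  -- key computations
  have key1 : e.app (op Y) (f ≫ g) = ξ := by
    rw [hnat f g, hg, ← hbnat, hξ']
    rw [← hnat' f (𝟙 Y'), Category.comp_id, hf]
    exact hai _
  have key2 : e'.app (op Y') (g ≫ f) = ξ' := by
    rw [hnat' g f, hf, ← hanat, hξ]
    rw [← hnat g (𝟙 Y), Category.comp_id, hg]
    exact hia _
  have R1 : f ≫ g ≫ c = c := by
    have h1 : (f ≫ g) ≫ c = c := by
      rw [← hfac (f ≫ g), key1, hξ, hfac (𝟙 Y), Category.id_comp]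
    rw [← Category.assoc]; exact h1
  have R2 : g ≫ f ≫ c' = c' := by
    have h1 : (g ≫ f) ≫ c' = c' := by
      rw [← hfac' (g ≫ f), key2, hξ', hfac' (𝟙 Y'), Category.id_comp]
    rw [← Category.assoc]; exact h1
  have hminj : ∀ {X : Cᵒᵖ}, Function.Injective (m.app X) := by
    intro X; rw [← AddCommGrpCat.mono_iff_injective]; infer_instance
  have hminj' : ∀ {X : Cᵒᵖ}, Function.Injective (m'.app X) := by
    intro X; rw [← AddCommGrpCat.mono_iff_injective]; infer_instance
  refine ⟨f, g, R1, R2, ?_, ?_⟩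
  · intro X u hu
    have hu0 : e.app (op X) u = 0 := by
      apply hminj
      rw [hfac u, hu, map_zero]; rfl
    have h2 : f ≫ c' = m'.app (op Y) (α.hom.app (op Y) ξ) := by
      rw [← hf, hfac' f]
    have h3 : u ≫ f ≫ c' = m'.app (op X) ((image η').map u.op (α.hom.app (op Y) ξ)) := by
      rw [h2, hmnat' u]
    rw [h3, ← hanat]
    have h4 : (image η).map u.op ξ = 0 := by
      rw [hξ, ← hnat u (𝟙 Y), Category.comp_id, hu0]
    rw [h4, map_zero, map_zero]; rfl
  · intro X u hu
    have hu0 : e'.app (op X) u = 0 := by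
      apply hminj'
      rw [hfac' u, hu, map_zero]; rfl
    have h2 : g ≫ c = m.app (op Y') (α.inv.app (op Y') ξ') := by
      rw [← hg, hfac g]
    have h3 : u ≫ g ≫ c = m.app (op X) ((image η).map u.op (α.inv.app (op Y') ξ')) := by
      rw [h2, hmnat u]
    rw [h3, ← hbnat]
    have h4 : (image η').map u.op ξ' = 0 := by
      rw [hξ', ← hnat' u (𝟙 Y'), Category.comp_id, hu0]
    rw [h4, map_zero, map_zero]; rfl
end
open CategoryTheory Limits Pretriangulated Opposite
universe v
section
variable {C : Type u} [Category.{v} C] [Preadditive C] [HasZeroObject C] [HasShift C ℤ]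
  [∀ n : ℤ, (shiftFunctor C n).Additive] [Pretriangulated C]

/-- The direct sum of two triangles. -/
noncomputable def sumTriangle (T₁ T₂ : Triangle C) : Triangle C := Triangle.mk
  (biprod.map T₁.mor₁ T₂.mor₁) (biprod.map T₁.mor₂ T₂.mor₂)
  (biprod.desc (T₁.mor₃ ≫ (shiftFunctor C (1:ℤ)).map biprod.inl)
               (T₂.mor₃ ≫ (shiftFunctor C (1:ℤ)).map biprod.inr))

lemma sumTriangle_distinguished (T₁ T₂ : Triangle C) (h₁ : T₁ ∈ distTriang C)
    (h₂ : T₂ ∈ distTriang C) : sumTriangle T₁ T₂ ∈ distTriang C := by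
  let T : WalkingPair → Triangle C := fun j => WalkingPair.casesOn j T₁ T₂
  have hT : ∀ j, T j ∈ distTriang C := by rintro (_|_) <;> assumption
  refine isomorphic_distinguished _ (productTriangle_distinguished T hT) _ ?_
  refine Triangle.isoMk _ _
    (⟨Pi.lift (fun j => match j with
        | WalkingPair.left => (biprod.fst : T₁.obj₁ ⊞ T₂.obj₁ ⟶ _)
        | WalkingPair.right => biprod.snd),
      biprod.lift (Pi.π _ WalkingPair.left) (Pi.π _ WalkingPair.right), ?_, ?_⟩)
    (⟨Pi.lift (fun j => match j with
        | WalkingPair.left => (biprod.fst : T₁.obj₂ ⊞ T₂.obj₂ ⟶ _)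
        | WalkingPair.right => biprod.snd),
      biprod.lift (Pi.π _ WalkingPair.left) (Pi.π _ WalkingPair.right), ?_, ?_⟩)
    (⟨Pi.lift (fun j => match j with
        | WalkingPair.left => (biprod.fst : T₁.obj₃ ⊞ T₂.obj₃ ⟶ _)
        | WalkingPair.right => biprod.snd),
      biprod.lift (Pi.π _ WalkingPair.left) (Pi.π _ WalkingPair.right), ?_, ?_⟩)
    ?_ ?_ ?_
  · apply biprod.hom_ext
    · erw [Category.assoc, biprod.lift_fst, Pi.lift_π]; exact (Category.id_comp _).symm
    · erw [Category.assoc, biprod.lift_snd, Pi.lift_π]; exact (Category.id_comp _).symm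
  · apply limit.hom_ext; rintro ⟨(_|_)⟩
    · erw [Category.assoc, Pi.lift_π, biprod.lift_fst]; exact (Category.id_comp _).symm
    · erw [Category.assoc, Pi.lift_π, biprod.lift_snd]; exact (Category.id_comp _).symm
  · apply biprod.hom_ext
    · erw [Category.assoc, biprod.lift_fst, Pi.lift_π]; exact (Category.id_comp _).symm
    · erw [Category.assoc, biprod.lift_snd, Pi.lift_π]; exact (Category.id_comp _).symm
  · apply limit.hom_ext; rintro ⟨(_|_)⟩
    · erw [Category.assoc, Pi.lift_π, biprod.lift_fst]; exact (Category.id_comp _).symm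
    · erw [Category.assoc, Pi.lift_π, biprod.lift_snd]; exact (Category.id_comp _).symm
  · apply biprod.hom_ext
    · erw [Category.assoc, biprod.lift_fst, Pi.lift_π]; exact (Category.id_comp _).symm
    · erw [Category.assoc, biprod.lift_snd, Pi.lift_π]; exact (Category.id_comp _).symm
  · apply limit.hom_ext; rintro ⟨(_|_)⟩
    · erw [Category.assoc, Pi.lift_π, biprod.lift_fst]; exact (Category.id_comp _).symm
    · erw [Category.assoc, Pi.lift_π, biprod.lift_snd]; exact (Category.id_comp _).symm
  · apply limit.hom_ext; rintro ⟨(_|_)⟩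
    · dsimp only [productTriangle, Triangle.mk_mor₁]
      erw [Category.assoc, Pi.lift_π]
      refine (biprod.map_fst _ _).trans (Eq.symm ((Category.assoc _ _ _).trans ?_))
      refine (congrArg (_ ≫ ·) (Pi.map_π (fun j => (T j).mor₁) WalkingPair.left)).trans ?_
      exact (Category.assoc _ _ _).symm.trans (congrArg (· ≫ _) (Pi.lift_π _ _))
    · dsimp only [productTriangle, Triangle.mk_mor₁]
      erw [Category.assoc, Pi.lift_π]
      refine (biprod.map_snd _ _).trans (Eq.symm ((Category.assoc _ _ _).trans ?_))
      refine (congrArg (_ ≫ ·) (Pi.map_π (fun j => (T j).mor₁) WalkingPair.right)).trans ?_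
      exact (Category.assoc _ _ _).symm.trans (congrArg (· ≫ _) (Pi.lift_π _ _))
  · apply limit.hom_ext; rintro ⟨(_|_)⟩
    · dsimp only [productTriangle, Triangle.mk_mor₁]
      erw [Category.assoc, Pi.lift_π]
      refine (biprod.map_fst _ _).trans (Eq.symm ((Category.assoc _ _ _).trans ?_))
      refine (congrArg (_ ≫ ·) (Pi.map_π (fun j => (T j).mor₂) WalkingPair.left)).trans ?_
      exact (Category.assoc _ _ _).symm.trans (congrArg (· ≫ _) (Pi.lift_π _ _))
    · dsimp only [productTriangle, Triangle.mk_mor₁]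
      erw [Category.assoc, Pi.lift_π]
      refine (biprod.map_snd _ _).trans (Eq.symm ((Category.assoc _ _ _).trans ?_))
      refine (congrArg (_ ≫ ·) (Pi.map_π (fun j => (T j).mor₂) WalkingPair.right)).trans ?_
      exact (Category.assoc _ _ _).symm.trans (congrArg (· ≫ _) (Pi.lift_π _ _))
  · change biprod.desc (T₁.mor₃ ≫ (shiftFunctor C (1:ℤ)).map biprod.inl)
        (T₂.mor₃ ≫ (shiftFunctor C (1:ℤ)).map biprod.inr) ≫ (shiftFunctor C (1:ℤ)).map (Pi.lift _) =
      Pi.lift _ ≫ (Limits.Pi.map fun j => (T j).mor₃) ≫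
        inv (piComparison (shiftFunctor C (1:ℤ)) fun j => (T j).obj₁)
    rw [← cancel_mono (piComparison (shiftFunctor C (1:ℤ)) (fun j => (T j).obj₁))]
    simp only [Category.assoc, IsIso.inv_hom_id, Category.comp_id]
    apply limit.hom_ext
    rintro ⟨(_|_)⟩ <;>
      · simp only [Category.assoc, piComparison_comp_π, limMap_π, Discrete.natTrans_app,
          limit.lift_π, Fan.mk_pt, Fan.mk_π_app]
        apply biprod.hom_ext' <;> simp [← Functor.map_comp, T, Fan.mk, Discrete.natTrans]
end
section
open CategoryTheory Limits Pretriangulated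
universe v' u'
variable {C : Type u'} [Category.{v'} C] [Preadditive C] [HasZeroObject C] [HasShift C ℤ]
  [∀ n : ℤ, (shiftFunctor C n).Additive] [Pretriangulated C]

/-- An elementary "swap" isomorphism built from an arbitrary pair of morphisms. -/
noncomputable def swapIso {X Y : C} (f : X ⟶ Y) (g : Y ⟶ X) : X ⊞ Y ≅ Y ⊞ X where
  hom := biprod.desc (biprod.lift f (𝟙 X - f ≫ g)) (biprod.lift (𝟙 Y) (-g))
  inv := biprod.desc (biprod.lift g (𝟙 Y - g ≫ f)) (biprod.lift (𝟙 X) (-f))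
  hom_inv_id := by
    apply biprod.hom_ext' <;> apply biprod.hom_ext <;>
      simp [Preadditive.comp_sub, Preadditive.sub_comp]
  inv_hom_id := by
    apply biprod.hom_ext' <;> apply biprod.hom_ext <;>
      simp [Preadditive.comp_sub, Preadditive.sub_comp]

/-- An elementary shear isomorphism. -/
noncomputable def shearIso (X Y : C) (f : Y ⟶ X) : X ⊞ Y ≅ X ⊞ Y where
  hom := biprod.desc biprod.inl (biprod.lift f (𝟙 Y))
  inv := biprod.desc biprod.inl (biprod.lift (-f) (𝟙 Y))
  hom_inv_id := by
    apply biprod.hom_ext' <;> apply biprod.hom_ext <;> simp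
  inv_hom_id := by
    apply biprod.hom_ext' <;> apply biprod.hom_ext <;> simp

lemma key_iso (A B C₀ : C) (a : A ⟶ B) (b : B ⟶ C₀) (c : C₀ ⟶ A⟦(1 : ℤ)⟧)
    (hT : Triangle.mk a b c ∈ distTriang C)
    (A' B' C₀' : C) (a' : A' ⟶ B') (b' : B' ⟶ C₀') (c' : C₀' ⟶ A'⟦(1 : ℤ)⟧)
    (hT' : Triangle.mk a' b' c' ∈ distTriang C)
    (f : C₀ ⟶ C₀') (g : C₀' ⟶ C₀)
    (R1 : f ≫ g ≫ c = c) (R2 : g ≫ f ≫ c' = c')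
    (V1 : ∀ {X : C} (u : X ⟶ C₀), u ≫ c = 0 → u ≫ f ≫ c' = 0)
    (V2 : ∀ {X : C} (u : X ⟶ C₀'), u ≫ c' = 0 → u ≫ g ≫ c = 0) :
    Nonempty ((B ⊞ (A' ⊞ C₀')) ≅ (B' ⊞ (A ⊞ C₀))) := by
  haveI : PreservesBinaryBiproducts (shiftFunctor C (1:ℤ)) :=
    preservesBinaryBiproducts_of_preservesBiproducts _
  -- step: lift f and g to the middle objects
  have hbf : (b ≫ f) ≫ c' = 0 := by
    rw [Category.assoc]
    exact V1 b (comp_distTriang_mor_zero₂₃ _ hT)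
  have hbg : (b' ≫ g) ≫ c = 0 := by
    rw [Category.assoc]
    exact V2 b' (comp_distTriang_mor_zero₂₃ _ hT')
  obtain ⟨fB, hfB⟩ := Triangle.coyoneda_exact₃ _ hT' (b ≫ f) hbf
  obtain ⟨gB, hgB⟩ := Triangle.coyoneda_exact₃ _ hT (b' ≫ g) hbg
  -- step: complete to shifted maps
  obtain ⟨(w : A⟦(1:ℤ)⟧ ⟶ A'⟦(1:ℤ)⟧), (hw : c ≫ w = f ≫ c'), -⟩ := complete_distinguished_triangle_morphism
    (Triangle.mk a b c).rotate (Triangle.mk a' b' c').rotate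
    (rot_of_distTriang _ hT) (rot_of_distTriang _ hT') fB f (by exact hfB)
  obtain ⟨(w' : A'⟦(1:ℤ)⟧ ⟶ A⟦(1:ℤ)⟧), (hw' : c' ≫ w' = g ≫ c), -⟩ := complete_distinguished_triangle_morphism
    (Triangle.mk a' b' c').rotate (Triangle.mk a b c).rotate
    (rot_of_distTriang _ hT') (rot_of_distTriang _ hT) gB g (by exact hgB)
  -- hw : c ≫ w = f ≫ c', hw' : c' ≫ w' = g ≫ c
  have R3 : c ≫ w ≫ w' = c := by
    rw [← Category.assoc, hw, Category.assoc, hw', R1]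
  -- the two sum triangles
  have hd₁ : sumTriangle (Triangle.mk a b c) (binaryBiproductTriangle A' C₀') ∈ distTriang C :=
    sumTriangle_distinguished _ _ hT (binaryBiproductTriangle_distinguished A' C₀')
  have hd₂ : sumTriangle (Triangle.mk a' b' c') (binaryBiproductTriangle A C₀) ∈ distTriang C :=
    sumTriangle_distinguished _ _ hT' (binaryBiproductTriangle_distinguished A C₀)
  -- the isomorphisms on the ends
  set φ₃ : C₀ ⊞ C₀' ⟶ C₀' ⊞ C₀ := (swapIso f g).hom ≫ (shearIso C₀' C₀ f).hom with hφ₃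
  set ψ : (A ⊞ A')⟦(1:ℤ)⟧ ⟶ (A' ⊞ A)⟦(1:ℤ)⟧ :=
    ((shiftFunctor C (1:ℤ)).mapBiprod A A').hom ≫ (swapIso w w').hom ≫
      ((shiftFunctor C (1:ℤ)).mapBiprod A' A).inv with hψ
  -- the key commutation
  have sq : (sumTriangle (Triangle.mk a b c) (binaryBiproductTriangle A' C₀')).mor₃ ≫ ψ =
      φ₃ ≫ (sumTriangle (Triangle.mk a' b' c') (binaryBiproductTriangle A C₀)).mor₃ := by
    dsimp only [sumTriangle, Triangle.mk, binaryBiproductTriangle]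
    rw [hψ, ← cancel_mono (((shiftFunctor C (1:ℤ)).mapBiprod A' A).hom)]
    apply biprod.hom_ext' <;> apply biprod.hom_ext <;>
      simp only [hφ₃, swapIso, shearIso, Functor.mapBiprod_hom, Functor.mapBiprod_inv] <;>
      simp [sumTriangle, hφ₃, swapIso, shearIso, binaryBiproductTriangle,
        Functor.mapBiprod_hom, Functor.mapBiprod_inv, ← Functor.map_comp, ← Functor.map_comp_assoc,
        Preadditive.sub_comp, Preadditive.comp_sub, Preadditive.add_comp,
        Preadditive.comp_add, R1, R2, R3, hw, hw', biprod.lift_desc]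
  -- complete to a morphism of (doubly rotated) triangles
  let φ := completeDistinguishedTriangleMorphism
    (sumTriangle (Triangle.mk a b c) (binaryBiproductTriangle A' C₀')).rotate.rotate
    (sumTriangle (Triangle.mk a' b' c') (binaryBiproductTriangle A C₀)).rotate.rotate
    (rot_of_distTriang _ (rot_of_distTriang _ hd₁))
    (rot_of_distTriang _ (rot_of_distTriang _ hd₂)) φ₃ ψ (by exact sq)
  have h1 : IsIso φ.hom₁ := by
    have h : φ.hom₁ = φ₃ := rfl
    rw [h, hφ₃]; exact inferInstanceAs (IsIso ((swapIso f g ≪≫ shearIso C₀' C₀ f).hom))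
  have h2 : IsIso φ.hom₂ := by
    have h : φ.hom₂ = ψ := rfl
    rw [h, hψ]; exact inferInstanceAs (IsIso (((shiftFunctor C (1:ℤ)).mapBiprod A A' ≪≫
      swapIso w w' ≪≫ ((shiftFunctor C (1:ℤ)).mapBiprod A' A).symm).hom))
  have h3 : IsIso φ.hom₃ := isIso₃_of_isIso₁₂ φ
    (rot_of_distTriang _ (rot_of_distTriang _ hd₁))
    (rot_of_distTriang _ (rot_of_distTriang _ hd₂)) h1 h2
  exact ⟨(shiftFunctor C (1:ℤ)).preimageIso (@asIso _ _ _ _ φ.hom₃ h3)⟩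
end
namespace Stmt6
open CategoryTheory Limits
variable {C : Type u} [SmallCategory C] [Preadditive C]

lemma clsSp_of_iso {X Y : C} (e : X ≅ Y) : clsSp C X = clsSp C Y := by
  apply QuotientAddGroup.eq.mpr
  have h : FreeAbelianGroup.of X - FreeAbelianGroup.of Y ∈ AddSubgroup.closure (splitRel C) :=
    AddSubgroup.subset_closure (Or.inl ⟨X, Y, ⟨e⟩, rfl⟩)
  have h2 := neg_mem h
  convert h2 using 1
  abel

lemma clsSp_biprod (X Y : C) [HasBinaryBiproduct X Y] :
    clsSp C (X ⊞ Y) = clsSp C X + clsSp C Y := by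
  have h : FreeAbelianGroup.of (X ⊞ Y) - FreeAbelianGroup.of X - FreeAbelianGroup.of Y ∈
      AddSubgroup.closure (splitRel C) :=
    AddSubgroup.subset_closure
      (Or.inr ⟨X, Y, BinaryBiproduct.bicone X Y, ⟨BinaryBiproduct.isBilimit X Y⟩, rfl⟩)
  have : clsSp C X + clsSp C Y = QuotientAddGroup.mk
      (FreeAbelianGroup.of X + FreeAbelianGroup.of Y) := rfl
  rw [this]
  apply QuotientAddGroup.eq.mpr
  have h2 := neg_mem h
  convert h2 using 1
  abel

end Stmt6



open Stmt6

theorem stmt6 (C : Type u) [SmallCategory C] [Preadditive C] [HasZeroObject C]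
    [HasShift C ℤ] [∀ n : ℤ, (shiftFunctor C n).Additive] [Pretriangulated C]
    [IsIdempotentComplete C]
    (A B C₀ : C) (a : A ⟶ B) (b : B ⟶ C₀) (c : C₀ ⟶ A⟦(1 : ℤ)⟧)
    (hT : Triangle.mk a b c ∈ distTriang C)
    (A' B' C₀' : C) (a' : A' ⟶ B') (b' : B' ⟶ C₀') (c' : C₀' ⟶ A'⟦(1 : ℤ)⟧)
    (hT' : Triangle.mk a' b' c' ∈ distTriang C)
    (hiso : Nonempty ((image (preadditiveYoneda.map c) : Cᵒᵖ ⥤ AddCommGrpCat.{u}) ≅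
        image (preadditiveYoneda.map c'))) :
    clsSp C A - clsSp C B + clsSp C C₀ = clsSp C A' - clsSp C B' + clsSp C C₀' := by
  obtain ⟨α⟩ := hiso
  obtain ⟨f, g, R1, R2, V1, V2⟩ := exists_fg c c' α
  obtain ⟨e⟩ := key_iso A B C₀ a b c hT A' B' C₀' a' b' c' hT' f g R1 R2 V1 V2
  have h := clsSp_of_iso e
  rw [clsSp_biprod, clsSp_biprod, clsSp_biprod, clsSp_biprod] at h
  rw [← sub_eq_zero,
    show clsSp C A - clsSp C B + clsSp C C₀ - (clsSp C A' - clsSp C B' + clsSp C C₀')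
      = (clsSp C B' + (clsSp C A + clsSp C C₀)) - (clsSp C B + (clsSp C A' + clsSp C C₀'))
      from by abel, ← h, sub_self]
end

section
/- Let C be a Krull–Schmidt triangulated category, X a contravariantly finite additive subcategory, and C₀ a rigid object (i.e. C(C₀, ΣC₀) = 0). If X₁ →^x X₀ →^y C₀ →^z ΣX₁ is a triangle in which y is a minimal right X-approximation of C₀, then every morphism f : X₁ → X₀ is radical; in particular, X₀ and X₁ have no nonzero direct summands in common, even up to isomorphism. -/
/-!
STATEMENT 13: Let `C` be a Krull–Schmidt triangulated category, `X` a contravariantly finite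
additive subcategory, and `C₀` a rigid object (`C(C₀, ΣC₀) = 0`). If
`X₁ →^x X₀ →^y C₀ →^z ΣX₁` is a triangle in which `y` is a minimal right `X`-approximation
of `C₀`, then every morphism `f : X₁ → X₀` is radical; in particular `X₀` and `X₁` have no
nonzero direct summands in common, even up to isomorphism.
-/

open CategoryTheory Limits Pretriangulated

universe u

namespace Stmt13

variable {C : Type u} [Category.{u} C] [Preadditive C]

/-- An object is indecomposable if it is nonzero and its only idempotent endomorphisms
are `0` and the identity. -/
def IsIndecObj (Z : C) : Prop :=
  ¬ IsZero Z ∧ ∀ e : Z ⟶ Z, e ≫ e = e → e = 0 ∨ e = 𝟙 Z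

/-- `U` is a direct summand of `Z`. -/
def IsSummand (U Z : C) : Prop := ∃ (i : U ⟶ Z) (p : Z ⟶ U), i ≫ p = 𝟙 U

/-- A morphism is radical if none of its components between indecomposable direct summands
is an isomorphism. -/
def IsRadicalHom {A B : C} (f : A ⟶ B) : Prop :=
  ∀ (Z W : C) (i : Z ⟶ A) (p : B ⟶ W), IsIndecObj Z → IsIndecObj W →
    IsSplitMono i → IsSplitEpi p → ¬ IsIso (i ≫ f ≫ p)

end Stmt13

open Stmt13

theorem stmt13 (C : Type u) [SmallCategory C] [Preadditive C] [HasZeroObject C]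
    [HasShift C ℤ] [∀ n : ℤ, (shiftFunctor C n).Additive] [Pretriangulated C]
    [HasFiniteBiproducts C]
    -- `C` is Krull–Schmidt: every object is a finite biproduct of objects with local
    -- endomorphism rings:
    (hKS : ∀ Z : C, ∃ (k : ℕ) (f : Fin k → C),
      (∀ i, IsLocalRing (End (f i))) ∧ Nonempty (Z ≅ ⨁ f))
    -- `X` is an additive subcategory, given by its class of objects `S`:
    (S : Set C)
    (hiso : ∀ A B : C, A ∈ S → Nonempty (A ≅ B) → B ∈ S)
    (hsum : ∀ A B : C, A ∈ S → B ∈ S →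
      ∀ (bc : BinaryBicone A B), bc.IsBilimit → bc.pt ∈ S)
    (hsummand : ∀ (A Z : C), A ∈ S → IsSummand Z A → Z ∈ S)
    -- `X` is contravariantly finite:
    (hcf : ∀ Cc : C, ∃ X' ∈ S, ∃ x : X' ⟶ Cc,
      ∀ Z ∈ S, ∀ f : Z ⟶ Cc, ∃ g : Z ⟶ X', g ≫ x = f)
    -- `C₀` is rigid:
    (C₀ : C) (hrigid : ∀ g : C₀ ⟶ C₀⟦(1 : ℤ)⟧, g = 0)
    -- the triangle, with `y` a minimal right `X`-approximation:
    (X₁ X₀ : C) (x : X₁ ⟶ X₀) (y : X₀ ⟶ C₀) (z : C₀ ⟶ X₁⟦(1 : ℤ)⟧)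
    (hT : Triangle.mk x y z ∈ (distTriang C))
    (hX₀ : X₀ ∈ S)
    (happrox : ∀ Z ∈ S, ∀ f : Z ⟶ C₀, ∃ g : Z ⟶ X₀, g ≫ y = f)
    (hmin : ∀ h : X₀ ⟶ X₀, h ≫ y = y → IsIso h) :
    (∀ f : X₁ ⟶ X₀, IsRadicalHom f) ∧
    (∀ Z : C, ¬ IsZero Z → IsSummand Z X₀ → IsSummand Z X₁ → False) := by
  have hxy : x ≫ y = 0 := comp_distTriang_mor_zero₁₂ _ hT
  have key : ∀ Z : C, ¬ IsZero Z → IsSummand Z X₀ → IsSummand Z X₁ → False := by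
    rintro Z hZ ⟨i, p, hip⟩ ⟨j, q, hjq⟩
    -- Step 1: `(q ≫ i) ≫ y` factors through `x`, using rigidity of `C₀`.
    have hfac : ∃ n : X₀ ⟶ C₀, (q ≫ i) ≫ y = x ≫ n := by
      have hrot2 := rot_of_distTriang _ (rot_of_distTriang _ hT)
      obtain ⟨g, hg⟩ := Triangle.yoneda_exact₂ _ hrot2 ((shiftFunctor C (1 : ℤ)).map ((q ≫ i) ≫ y)) (hrigid _)
      refine ⟨(shiftFunctor C (1 : ℤ)).preimage (-g), ?_⟩
      apply (shiftFunctor C (1 : ℤ)).map_injective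
      have h2 : (shiftFunctor C (1 : ℤ)).map (x ≫ (shiftFunctor C (1 : ℤ)).preimage (-g))
          = (shiftFunctor C (1 : ℤ)).map x ≫ (-g) := by
        rw [Functor.map_comp]; exact congrArg ((shiftFunctor C (1 : ℤ)).map x ≫ ·) (Functor.map_preimage _ _)
      rw [h2]; refine hg.trans ?_
      change (-(shiftFunctor C (1 : ℤ)).map x) ≫ g = _
      exact (Preadditive.neg_comp _ _).trans (Preadditive.comp_neg _ _).symm
    obtain ⟨n, hn⟩ := hfac
    obtain ⟨g, hg⟩ := happrox X₀ hX₀ n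
    have hiy : i ≫ y = j ≫ x ≫ n := by
      have : i ≫ y = (j ≫ q) ≫ i ≫ y := by rw [hjq, Category.id_comp]
      rw [this, Category.assoc, ← Category.assoc q, hn]
    -- Step 2: first application of minimality.
    set h : X₀ ⟶ X₀ := 𝟙 X₀ - p ≫ i + p ≫ j ≫ x ≫ g with hh
    have hhy : h ≫ y = y := by
      rw [hh, Preadditive.add_comp, Preadditive.sub_comp, Category.id_comp]
      have h1 : (p ≫ i) ≫ y = (p ≫ j ≫ x ≫ g) ≫ y := by
        simp only [Category.assoc, hiy, hg]
      rw [h1]; abel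
    have hisoh : IsIso h := hmin h hhy
    have hih : i ≫ h = j ≫ x ≫ g := by
      rw [hh]
      simp only [Preadditive.comp_add, Preadditive.comp_sub, Category.comp_id,
        ← Category.assoc, hip, Category.id_comp]
      abel
    -- Step 3: replace the inclusion `i` by `i' := j ≫ x`, which kills `y`.
    set i' : Z ⟶ X₀ := j ≫ x with hi'
    set p' : X₀ ⟶ Z := g ≫ inv h ≫ p with hp'
    have hi2 : i = j ≫ x ≫ g ≫ inv h := by
      have := congrArg (fun t => t ≫ inv h) hih
      simpa [Category.assoc] using this
    have hi'p' : i' ≫ p' = 𝟙 Z := by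
      rw [hi', hp', ← hip, hi2]
      simp [Category.assoc]
    have hi'y : i' ≫ y = 0 := by rw [hi', Category.assoc, hxy, comp_zero]
    -- Step 4: second application of minimality.
    set h' : X₀ ⟶ X₀ := 𝟙 X₀ - p' ≫ i' with hh'
    have hh'y : h' ≫ y = y := by
      rw [hh', Preadditive.sub_comp, Category.id_comp, Category.assoc, hi'y,
        comp_zero, sub_zero]
    have hisoh' : IsIso h' := hmin h' hh'y
    have hi'h' : i' ≫ h' = 0 := by
      rw [hh', Preadditive.comp_sub, Category.comp_id, ← Category.assoc, hi'p',
        Category.id_comp, sub_self]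
    have hi'0 : i' = 0 := by
      have := congrArg (fun t => t ≫ inv h') hi'h'
      simpa [Category.assoc] using this
    apply hZ
    rw [Limits.IsZero.iff_id_eq_zero, ← hi'p', hi'0, zero_comp]
  constructor
  · intro f Z W i p hZ hW hi hp hiso
    refine key Z hZ.1 ⟨i ≫ f, p ≫ inv (i ≫ f ≫ p), ?_⟩ ⟨i, retraction i, by simp⟩
    have e : (i ≫ f) ≫ p ≫ inv (i ≫ f ≫ p) = (i ≫ f ≫ p) ≫ inv (i ≫ f ≫ p) := by
      simp only [Category.assoc]
    rw [e, IsIso.hom_inv_id]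
  · exact key
end

section
/- Let S be a disc with marked points M̄_n (discrete points with n two-sided accumulation points, accumulation points included) and let Y be the mutation of a triangulation X of (S, M̄_n) at an arc X₀, i.e. Y = (X \ {X₀}) ∪ {Y₀} for a unique arc Y₀ ≠ X₀. If X is a fan triangulation, then Y is a fan triangulation; if the subcategory of C̄_n generated by X is rigid, then so is the subcategory generated by Y. -/
/-!
STATEMENT 16: Let `S` be a disc with marked points `M̄_n` and let `Y` be the mutation of a
triangulation `X` of `(S, M̄_n)` at an arc `X₀`, i.e. `Y = (X \ {X₀}) ∪ {Y₀}` for a unique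
arc `Y₀ ≠ X₀`. If `X` is a fan triangulation, then `Y` is a fan triangulation; if the
subcategory of `C̄_n` generated by `X` is rigid, then so is the subcategory generated by
`Y` (rigidity is expressed combinatorially via the vanishing-of-`Ext¹` criterion).
-/

/-! Combinatorial model of the disc `(S, M̄_n)`. -/

namespace PY

/-- The set of marked points `M̄_n`: `n` sectors (ordered anticlockwise), each consisting of
an accumulation point `⊥` followed by a `ℤ`-indexed family of ordinary marked points. -/
abbrev Pt (n : ℕ) := Fin n ×ₗ (WithBot ℤ)

/-- A point is an accumulation point. -/
def isAcc {n : ℕ} (p : Pt n) : Prop := (ofLex p).2 = ⊥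

/-- The anticlockwise successor `p⁺` of a marked point; by convention `p⁺ = p` for an
accumulation point `p`. -/
def succPt {n : ℕ} (p : Pt n) : Pt n := toLex ((ofLex p).1, (ofLex p).2.map (· + 1))

/-- The clockwise predecessor `p⁻`; by convention `p⁻ = p` for an accumulation point. -/
def predPt {n : ℕ} (p : Pt n) : Pt n := toLex ((ofLex p).1, (ofLex p).2.map (· - 1))

/-- `z` lies in the closed anticlockwise interval `[x, y]`. -/
def inCC {n : ℕ} (x y z : Pt n) : Prop :=
  if x ≤ y then (x ≤ z ∧ z ≤ y) else (x ≤ z ∨ z ≤ y)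

/-- `z` lies strictly between `x` and `y` anticlockwise (the open interval `(x, y)`). -/
def strictBtw {n : ℕ} (x y z : Pt n) : Prop := inCC x y z ∧ z ≠ x ∧ z ≠ y

/-- An arc, given by its two endpoints. -/
structure Arc (n : ℕ) where
  e1 : Pt n
  e2 : Pt n

/-- An arc is valid if its endpoints are distinct, non-neighbouring marked points. -/
def Arc.valid {n : ℕ} (A : Arc n) : Prop :=
  A.e1 ≠ A.e2 ∧ A.e2 ≠ succPt A.e1 ∧ A.e1 ≠ succPt A.e2

/-- Two arcs coincide (as unordered pairs of endpoints). -/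
def sameArc {n : ℕ} (A B : Arc n) : Prop :=
  (A.e1 = B.e1 ∧ A.e2 = B.e2) ∨ (A.e1 = B.e2 ∧ A.e2 = B.e1)

/-- Two arcs cross transversely: the endpoints of one strictly separate the endpoints of
the other. -/
def crossing {n : ℕ} (A B : Arc n) : Prop :=
  (strictBtw A.e1 A.e2 B.e1 ∧ strictBtw A.e2 A.e1 B.e2) ∨
  (strictBtw A.e1 A.e2 B.e2 ∧ strictBtw A.e2 A.e1 B.e1)

/-- A triangulation: a maximal set of valid, pairwise non-transversely-crossing arcs. -/
def IsTriangulation {n : ℕ} (T : Set (Arc n)) : Prop :=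
  (∀ A ∈ T, A.valid) ∧
  (∀ A ∈ T, ∀ B ∈ T, ¬ crossing A B) ∧
  (∀ B : Arc n, B.valid → (∀ A ∈ T, ¬ crossing A B) → ∃ A ∈ T, sameArc A B)

/-- Two arcs share an endpoint. -/
def sharesEndpoint {n : ℕ} (A B : Arc n) : Prop :=
  A.e1 = B.e1 ∨ A.e1 = B.e2 ∨ A.e2 = B.e1 ∨ A.e2 = B.e2

/-- An infinite leapfrog in a set of arcs: two infinite families `A_i`, `B_i` of pairwise
distinct, pairwise non-crossing arcs with the prescribed incidences, all crossed by a
common curve. -/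
def IsInfiniteLeapfrog {n : ℕ} (T : Set (Arc n)) : Prop :=
  ∃ I : Set ℤ, (I = Set.univ ∨ I = {i | i ≤ 0} ∨ I = {i | 0 ≤ i}) ∧
  ∃ A B : ℤ → Arc n,
    (∀ i ∈ I, A i ∈ T ∧ B i ∈ T) ∧
    (∀ i ∈ I, ∀ j ∈ I, i ≠ j → ¬ sameArc (A i) (A j) ∧ ¬ sameArc (B i) (B j)) ∧
    (∀ i ∈ I, ∀ j ∈ I, ¬ sameArc (A i) (B j)) ∧
    (∀ i ∈ I, ∀ j ∈ I, ¬ crossing (A i) (A j) ∧ ¬ crossing (B i) (B j) ∧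
      ¬ crossing (A i) (B j)) ∧
    (∀ i ∈ I, sharesEndpoint (A i) (B i)) ∧
    (∀ i ∈ I, (i - 1) ∈ I → sharesEndpoint (A i) (B (i - 1))) ∧
    (∃ c d : Pt n, ∀ i ∈ I, crossing (A i) ⟨c, d⟩ ∧ crossing (B i) ⟨c, d⟩)

/-- A fan triangulation: a triangulation with no infinite leapfrog. -/
def IsFanTriangulation {n : ℕ} (T : Set (Arc n)) : Prop :=
  IsTriangulation T ∧ ¬ IsInfiniteLeapfrog T

/-- The combinatorial criterion for `Ext¹(C, A) ≠ 0` between the indecomposables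
corresponding to two arcs (property (P3) of the completed discrete cluster category). -/
def extNonzero {n : ℕ} (Cc A : Arc n) : Prop :=
  crossing Cc A ∨
  (¬ sameArc Cc A ∧ ∃ p c0 a0 : Pt n, isAcc p ∧ c0 ≠ p ∧ a0 ≠ p ∧
    ({Cc.e1, Cc.e2} : Set (Pt n)) = {p, c0} ∧ ({A.e1, A.e2} : Set (Pt n)) = {p, a0} ∧
    ¬ strictBtw c0 a0 p) ∨
  (sameArc Cc A ∧ isAcc A.e1 ∧ isAcc A.e2)

/-- A set of arcs is rigid if `Ext¹` vanishes between (the objects corresponding to) any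
two of its arcs. -/
def RigidSet {n : ℕ} (T : Set (Arc n)) : Prop :=
  ∀ A ∈ T, ∀ Cc ∈ T, ¬ extNonzero Cc A

/-- `Y` is the mutation of the triangulation `T` at the arc `X₀ ∈ T`. -/
def IsMutation {n : ℕ} (T Y : Set (Arc n)) (X₀ : Arc n) : Prop :=
  X₀ ∈ T ∧ IsTriangulation Y ∧
  ∃ Y₀ : Arc n, Y₀ ∉ T ∧ ¬ sameArc Y₀ X₀ ∧ Y = (T \ {X₀}) ∪ {Y₀}

end PY

open PY

/-! Auxiliary development -/
section Aux
variable {α : Type*} [LinearOrder α]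

def inCC' (x y z : α) : Prop := if x ≤ y then (x ≤ z ∧ z ≤ y) else (x ≤ z ∨ z ≤ y)
def sbtw' (x y z : α) : Prop := inCC' x y z ∧ z ≠ x ∧ z ≠ y
def cross' (a b c d : α) : Prop := (sbtw' a b c ∧ sbtw' b a d) ∨ (sbtw' a b d ∧ sbtw' b a c)

lemma sbtw'_iff (x y z : α) :
    sbtw' x y z ↔ ((x < z ∧ z < y) ∨ (y < x ∧ x < z) ∨ (z < y ∧ y < x)) := by
  unfold sbtw' inCC'
  rcases le_or_gt x y with h | h
  · rw [if_pos h]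
    constructor
    · rintro ⟨⟨h1, h2⟩, n1, n2⟩
      exact Or.inl ⟨h1.lt_of_ne (Ne.symm n1), h2.lt_of_ne n2⟩
    · rintro (⟨h1, h2⟩ | ⟨h1, h2⟩ | ⟨h1, h2⟩)
      · exact ⟨⟨h1.le, h2.le⟩, h1.ne', h2.ne⟩
      · exact absurd (h1.trans_le h) (lt_irrefl _)
      · exact absurd (h2.trans_le h) (lt_irrefl _)
  · rw [if_neg (not_le.mpr h)]
    constructor
    · rintro ⟨h1 | h1, n1, n2⟩
      · exact Or.inr (Or.inl ⟨h, h1.lt_of_ne (Ne.symm n1)⟩)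
      · exact Or.inr (Or.inr ⟨h1.lt_of_ne n2, h⟩)
    · rintro (⟨h1, h2⟩ | ⟨h1, h2⟩ | ⟨h1, h2⟩)
      · exact absurd (h1.trans h2) (not_lt.mpr h.le)
      · exact ⟨Or.inl h2.le, h2.ne', (h1.trans h2).ne'⟩
      · exact ⟨Or.inr h1.le, (h1.trans h2).ne, h1.ne⟩

set_option maxHeartbeats 2000000 in
lemma coreZ1 (a b p q u v : ℤ) (h1 : sbtw' a b p) (h2 : sbtw' b a u)
    (h3 : sbtw' p q u) (h4 : sbtw' q p v) :
    cross' a b u v ∨ cross' a b p q := by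
  rw [sbtw'_iff] at h1 h2 h3 h4
  unfold cross'
  simp only [sbtw'_iff]
  rcases h1 with ⟨e,f⟩|⟨e,f⟩|⟨e,f⟩ <;> rcases h2 with ⟨g,h⟩|⟨g,h⟩|⟨g,h⟩ <;>
    rcases h3 with ⟨i,j⟩|⟨i,j⟩|⟨i,j⟩ <;> rcases h4 with ⟨k,l⟩|⟨k,l⟩|⟨k,l⟩ <;> omega

set_option maxHeartbeats 2000000 in
lemma coreZ2 (a b p q u v : ℤ) (h1 : sbtw' a b p) (h2 : sbtw' b a v)
    (h3 : sbtw' p q u) (h4 : sbtw' q p v) :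
    cross' a b u v ∨ cross' a b p q := by
  rw [sbtw'_iff] at h1 h2 h3 h4
  unfold cross'
  simp only [sbtw'_iff]
  rcases h1 with ⟨e,f⟩|⟨e,f⟩|⟨e,f⟩ <;> rcases h2 with ⟨g,h⟩|⟨g,h⟩|⟨g,h⟩ <;>
    rcases h3 with ⟨i,j⟩|⟨i,j⟩|⟨i,j⟩ <;> rcases h4 with ⟨k,l⟩|⟨k,l⟩|⟨k,l⟩ <;> omega

lemma notBoth' {x y z : α} (h1 : sbtw' x y z) (h2 : sbtw' y x z) : False := by
  rw [sbtw'_iff] at h1 h2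
  rcases h1 with ⟨a,b⟩|⟨a,b⟩|⟨a,b⟩ <;> rcases h2 with ⟨c,d⟩|⟨c,d⟩|⟨c,d⟩ <;>
    first
      | exact absurd (a.trans c) (lt_irrefl _)
      | exact absurd (b.trans d) (lt_irrefl _)
      | exact absurd (a.trans d) (lt_irrefl _)
      | exact absurd (b.trans c) (lt_irrefl _)
      | exact absurd (c.trans a) (lt_irrefl _)
      | exact absurd (d.trans b) (lt_irrefl _)
      | exact absurd (d.trans a) (lt_irrefl _)
      | exact absurd (c.trans b) (lt_irrefl _)
      | exact absurd ((a.trans c).trans d) (lt_irrefl _)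
      | exact absurd ((b.trans c).trans d) (lt_irrefl _)
      | exact absurd ((a.trans b).trans c) (lt_irrefl _)
      | exact absurd ((c.trans d).trans a) (lt_irrefl _)

-- transfer of predicates along maps preserving order on a subset
section transfer
variable {β : Type*} [LinearOrder β] (f : α → β) (S : Set α)
  (hf : ∀ s ∈ S, ∀ t ∈ S, (s ≤ t ↔ f s ≤ f t))

include hf

lemma eq_map {x y : α} (hx : x ∈ S) (hy : y ∈ S) : x = y ↔ f x = f y :=
  ⟨fun h => by rw [h], fun h =>
    le_antisymm ((hf x hx y hy).mpr h.le) ((hf y hy x hx).mpr h.ge)⟩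

lemma inCC'_map {x y z : α} (hx : x ∈ S) (hy : y ∈ S) (hz : z ∈ S) :
    inCC' x y z ↔ inCC' (f x) (f y) (f z) := by
  unfold inCC'
  by_cases h : x ≤ y
  · rw [if_pos h, if_pos ((hf x hx y hy).mp h)]
    exact and_congr (hf x hx z hz) (hf z hz y hy)
  · rw [if_neg h, if_neg (fun h' => h ((hf x hx y hy).mpr h'))]
    exact or_congr (hf x hx z hz) (hf z hz y hy)

lemma sbtw'_map {x y z : α} (hx : x ∈ S) (hy : y ∈ S) (hz : z ∈ S) :
    sbtw' x y z ↔ sbtw' (f x) (f y) (f z) :=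
  and_congr (inCC'_map f S hf hx hy hz)
    (and_congr (not_congr (eq_map f S hf hz hx)) (not_congr (eq_map f S hf hz hy)))

lemma cross'_map {a b c d : α} (ha : a ∈ S) (hb : b ∈ S) (hc : c ∈ S) (hd : d ∈ S) :
    cross' a b c d ↔ cross' (f a) (f b) (f c) (f d) :=
  or_congr (and_congr (sbtw'_map f S hf ha hb hc) (sbtw'_map f S hf hb ha hd))
    (and_congr (sbtw'_map f S hf ha hb hd) (sbtw'_map f S hf hb ha hc))

end transfer

open Classical in
noncomputable def rkF (L : Finset α) (x : α) : ℤ :=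
  ((L.filter (fun z => z < x)).card : ℤ)

lemma rk_le (L : Finset α) {x y : α} (hx : x ∈ L) (hy : y ∈ L) :
    x ≤ y ↔ rkF L x ≤ rkF L y := by
  classical
  unfold rkF
  constructor
  · intro h
    have : (L.filter (fun z => z < x)) ⊆ (L.filter (fun z => z < y)) := by
      intro z hz
      simp only [Finset.mem_filter] at *
      exact ⟨hz.1, hz.2.trans_le h⟩
    exact_mod_cast Finset.card_le_card (this.trans (by intro z hz; convert hz using 2 <;> simp))
  · intro h
    by_contra hxy
    have hlt : y < x := not_le.mp hxy
    have hss : (L.filter (fun z => z < y)) ⊂ (L.filter (fun z => z < x)) := by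
      refine (Finset.ssubset_iff_of_subset ?_).mpr ⟨y, ?_, ?_⟩
      · intro z hz
        simp only [Finset.mem_filter] at *
        exact ⟨hz.1, hz.2.trans hlt⟩
      · simp [hy, hlt]
      · simp
    have := Finset.card_lt_card hss
    omega

end Aux

/-! Bridges between the `PY` definitions and the generic ones -/

lemma inCC_iff' {n : ℕ} (x y z : Pt n) : inCC x y z ↔ inCC' x y z := by
  unfold inCC inCC'
  by_cases h : x ≤ y <;> simp [h]

lemma strictBtw_iff' {n : ℕ} (x y z : Pt n) : strictBtw x y z ↔ sbtw' x y z :=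
  and_congr (inCC_iff' x y z) Iff.rfl

lemma crossing_iff' {n : ℕ} (A B : Arc n) :
    crossing A B ↔ cross' A.e1 A.e2 B.e1 B.e2 :=
  or_congr (and_congr (strictBtw_iff' _ _ _) (strictBtw_iff' _ _ _))
    (and_congr (strictBtw_iff' _ _ _) (strictBtw_iff' _ _ _))

lemma notBothPt {n : ℕ} {x y z : Pt n} (h1 : strictBtw x y z) (h2 : strictBtw y x z) :
    False :=
  notBoth' ((strictBtw_iff' _ _ _).mp h1) ((strictBtw_iff' _ _ _).mp h2)

lemma corePt1 {n : ℕ} (a b p q u v : Pt n) (h1 : strictBtw a b p) (h2 : strictBtw b a u)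
    (h3 : strictBtw p q u) (h4 : strictBtw q p v) :
    crossing (⟨a,b⟩ : Arc n) ⟨u,v⟩ ∨ crossing (⟨a,b⟩ : Arc n) ⟨p,q⟩ := by
  classical
  set L : Finset (Pt n) := {a,b,p,q,u,v} with hL
  set f : Pt n → ℤ := rkF L with hfdef
  set S : Set (Pt n) := ↑L with hS
  have hf : ∀ s ∈ S, ∀ t ∈ S, (s ≤ t ↔ f s ≤ f t) := by
    intro s hs t ht
    exact rk_le L (by exact_mod_cast hs) (by exact_mod_cast ht)
  have ha : a ∈ S := by simp [hS, hL]
  have hb : b ∈ S := by simp [hS, hL]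
  have hp : p ∈ S := by simp [hS, hL]
  have hq : q ∈ S := by simp [hS, hL]
  have hu : u ∈ S := by simp [hS, hL]
  have hv : v ∈ S := by simp [hS, hL]
  have H1 := (sbtw'_map f S hf ha hb hp).mp ((strictBtw_iff' _ _ _).mp h1)
  have H2 := (sbtw'_map f S hf hb ha hu).mp ((strictBtw_iff' _ _ _).mp h2)
  have H3 := (sbtw'_map f S hf hp hq hu).mp ((strictBtw_iff' _ _ _).mp h3)
  have H4 := (sbtw'_map f S hf hq hp hv).mp ((strictBtw_iff' _ _ _).mp h4)
  rcases coreZ1 (f a) (f b) (f p) (f q) (f u) (f v) H1 H2 H3 H4 with h | h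
  · exact Or.inl ((crossing_iff' _ _).mpr ((cross'_map f S hf ha hb hu hv).mpr h))
  · exact Or.inr ((crossing_iff' _ _).mpr ((cross'_map f S hf ha hb hp hq).mpr h))

lemma corePt2 {n : ℕ} (a b p q u v : Pt n) (h1 : strictBtw a b p) (h2 : strictBtw b a v)
    (h3 : strictBtw p q u) (h4 : strictBtw q p v) :
    crossing (⟨a,b⟩ : Arc n) ⟨u,v⟩ ∨ crossing (⟨a,b⟩ : Arc n) ⟨p,q⟩ := by
  classical
  set L : Finset (Pt n) := {a,b,p,q,u,v} with hL
  set f : Pt n → ℤ := rkF L with hfdef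
  set S : Set (Pt n) := ↑L with hS
  have hf : ∀ s ∈ S, ∀ t ∈ S, (s ≤ t ↔ f s ≤ f t) := by
    intro s hs t ht
    exact rk_le L (by exact_mod_cast hs) (by exact_mod_cast ht)
  have ha : a ∈ S := by simp [hS, hL]
  have hb : b ∈ S := by simp [hS, hL]
  have hp : p ∈ S := by simp [hS, hL]
  have hq : q ∈ S := by simp [hS, hL]
  have hu : u ∈ S := by simp [hS, hL]
  have hv : v ∈ S := by simp [hS, hL]
  have H1 := (sbtw'_map f S hf ha hb hp).mp ((strictBtw_iff' _ _ _).mp h1)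
  have H2 := (sbtw'_map f S hf hb ha hv).mp ((strictBtw_iff' _ _ _).mp h2)
  have H3 := (sbtw'_map f S hf hp hq hu).mp ((strictBtw_iff' _ _ _).mp h3)
  have H4 := (sbtw'_map f S hf hq hp hv).mp ((strictBtw_iff' _ _ _).mp h4)
  rcases coreZ2 (f a) (f b) (f p) (f q) (f u) (f v) H1 H2 H3 H4 with h | h
  · exact Or.inl ((crossing_iff' _ _).mpr ((cross'_map f S hf ha hb hu hv).mpr h))
  · exact Or.inr ((crossing_iff' _ _).mpr ((cross'_map f S hf ha hb hp hq).mpr h))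

/-! Lemmas about `succPt` and accumulation points -/

lemma succPt_of_acc {n : ℕ} {p : Pt n} (h : isAcc p) : succPt p = p := by
  unfold succPt
  unfold isAcc at h
  rw [h, WithBot.map_bot, ← h]
  rfl

lemma eq_of_acc_eq_succ {n : ℕ} {p x : Pt n} (h : isAcc p) (he : p = succPt x) :
    p = x := by
  have hx : isAcc x := by
    unfold isAcc at h ⊢
    rw [he] at h
    unfold succPt at h
    simp only [ofLex_toLex] at h
    rcases h2 : (ofLex x).2 with _ | k
    · rfl
    · rw [h2] at h
      cases h
  rw [he, succPt_of_acc hx]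

lemma valid_acc_arc {n : ℕ} {p u : Pt n} (h : isAcc p) (hne : u ≠ p) :
    Arc.valid (⟨p, u⟩ : Arc n) := by
  refine ⟨Ne.symm hne, ?_, ?_⟩
  · rw [succPt_of_acc h]; exact hne
  · intro he; exact hne (eq_of_acc_eq_succ h he).symm

/-! Lemmas about `sameArc` and `crossing` -/

lemma sameArc_refl {n : ℕ} (A : Arc n) : sameArc A A := Or.inl ⟨rfl, rfl⟩

lemma sameArc_symm {n : ℕ} {A B : Arc n} (h : sameArc A B) : sameArc B A := by
  rcases h with ⟨h1, h2⟩ | ⟨h1, h2⟩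
  · exact Or.inl ⟨h1.symm, h2.symm⟩
  · exact Or.inr ⟨h2.symm, h1.symm⟩

lemma sameArc_trans {n : ℕ} {A B C : Arc n} (h : sameArc A B) (h' : sameArc B C) :
    sameArc A C := by
  rcases h with ⟨h1, h2⟩ | ⟨h1, h2⟩ <;> rcases h' with ⟨h3, h4⟩ | ⟨h3, h4⟩
  · exact Or.inl ⟨h1.trans h3, h2.trans h4⟩
  · exact Or.inr ⟨h1.trans h3, h2.trans h4⟩
  · exact Or.inr ⟨h1.trans h4, h2.trans h3⟩
  · exact Or.inl ⟨h1.trans h4, h2.trans h3⟩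

lemma sameArc_pair_eq {n : ℕ} {A B : Arc n} (h : sameArc A B) :
    ({A.e1, A.e2} : Set (Pt n)) = {B.e1, B.e2} := by
  rcases h with ⟨h1, h2⟩ | ⟨h1, h2⟩
  · rw [h1, h2]
  · rw [h1, h2, Set.pair_comm]

lemma crossing_swap₁ {n : ℕ} (a b : Pt n) (C : Arc n) :
    crossing ⟨a, b⟩ C ↔ crossing ⟨b, a⟩ C := by
  unfold crossing
  dsimp only
  tauto

lemma crossing_swap₂ {n : ℕ} (A : Arc n) (c d : Pt n) :
    crossing A ⟨c, d⟩ ↔ crossing A ⟨d, c⟩ := by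
  unfold crossing
  dsimp only
  tauto

lemma crossing_congr₁ {n : ℕ} {A A' : Arc n} (h : sameArc A A') (B : Arc n) :
    crossing A B ↔ crossing A' B := by
  obtain ⟨a1, a2⟩ := A
  obtain ⟨a1', a2'⟩ := A'
  rcases h with ⟨h1, h2⟩ | ⟨h1, h2⟩ <;> dsimp only at h1 h2 <;> subst h1 <;> subst h2
  · rfl
  · exact crossing_swap₁ _ _ _

lemma crossing_congr₂ {n : ℕ} {B B' : Arc n} (h : sameArc B B') (A : Arc n) :
    crossing A B ↔ crossing A B' := by
  obtain ⟨b1, b2⟩ := B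
  obtain ⟨b1', b2'⟩ := B'
  rcases h with ⟨h1, h2⟩ | ⟨h1, h2⟩ <;> dsimp only at h1 h2 <;> subst h1 <;> subst h2
  · rfl
  · exact crossing_swap₂ _ _ _

lemma not_crossing_of_shared₂ {n : ℕ} {A B : Arc n}
    (h : B.e2 = A.e1 ∨ B.e2 = A.e2) : ¬ crossing A B := by
  rintro (⟨_, _, hn1, hn2⟩ | ⟨⟨_, hn1, hn2⟩, _⟩) <;> rcases h with h | h <;>
    first
      | exact hn1 h
      | exact hn2 h


/-! `extNonzero` transport along `sameArc` -/

lemma ext_of_sameArc {n : ℕ} {C C' A A' : Arc n} (h1 : sameArc C C') (h2 : sameArc A A')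
    (h : extNonzero C A) : extNonzero C' A' := by
  rcases h with hc | ⟨hns, p, c0, a0, hacc, hc0, ha0, hCs, hAs, hb⟩ | ⟨hsa, k1, k2⟩
  · exact Or.inl ((crossing_congr₂ h2 C').mp ((crossing_congr₁ h1 A).mp hc))
  · refine Or.inr (Or.inl ⟨fun hs => hns (sameArc_trans (sameArc_trans h1 hs)
      (sameArc_symm h2)), p, c0, a0, hacc, hc0, ha0, ?_, ?_, hb⟩)
    · rw [← sameArc_pair_eq h1]; exact hCs
    · rw [← sameArc_pair_eq h2]; exact hAs
  · refine Or.inr (Or.inr ⟨sameArc_trans (sameArc_symm h1) (sameArc_trans hsa h2), ?_, ?_⟩) <;>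
      rcases h2 with ⟨e1, e2⟩ | ⟨e1, e2⟩
    · exact e1 ▸ k1
    · exact e2 ▸ k2
    · exact e2 ▸ k2
    · exact e1 ▸ k1

/-! The key geometric contradiction: in a rigid triangulation no mutation can create
an arc with an accumulation-point endpoint (when the new arc crosses the old one). -/

lemma keyContr {n : ℕ} {T Y : Set (Arc n)} {X₀ Y₀ : Arc n}
    (hT : IsTriangulation T) (hYtri : IsTriangulation Y)
    (hrig : RigidSet T)
    (hX₀T : X₀ ∈ T) (hY₀Y : Y₀ ∈ Y) (hsub : ∀ A ∈ T, A ≠ X₀ → A ∈ Y)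
    {p q u v : Pt n} (hacc : isAcc p)
    (h3 : strictBtw p q u) (h4 : strictBtw q p v)
    (hYpq : sameArc Y₀ ⟨p, q⟩) (hXuv : sameArc X₀ ⟨u, v⟩) : False := by
  have hup : u ≠ p := h3.2.1
  have hvp : v ≠ p := h4.2.2
  have nc1 : ∀ A ∈ T, ¬ crossing A (⟨p, u⟩ : Arc n) := by
    intro A hA hcr
    by_cases hAX : A = X₀
    · subst hAX
      refine not_crossing_of_shared₂ ?_ hcr
      rcases hXuv with ⟨e1, e2⟩ | ⟨e1, e2⟩
      · exact Or.inl e1.symm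
      · exact Or.inr e2.symm
    · have hAY : A ∈ Y := hsub A hA hAX
      have hcore : crossing (⟨A.e1, A.e2⟩ : Arc n) ⟨u, v⟩ ∨
          crossing (⟨A.e1, A.e2⟩ : Arc n) ⟨p, q⟩ := by
        rcases hcr with ⟨c1, c2⟩ | ⟨c1, c2⟩
        · exact corePt1 A.e1 A.e2 p q u v c1 c2 h3 h4
        · rcases corePt1 A.e2 A.e1 p q u v c2 c1 h3 h4 with h | h
          · exact Or.inl ((crossing_swap₁ _ _ _).mpr h)
          · exact Or.inr ((crossing_swap₁ _ _ _).mpr h)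
      have hAeta : (⟨A.e1, A.e2⟩ : Arc n) = A := rfl
      rw [hAeta] at hcore
      rcases hcore with h | h
      · exact hT.2.1 A hA X₀ hX₀T ((crossing_congr₂ hXuv A).mpr h)
      · exact hYtri.2.1 A hAY Y₀ hY₀Y ((crossing_congr₂ hYpq A).mpr h)
  have nc2 : ∀ A ∈ T, ¬ crossing A (⟨p, v⟩ : Arc n) := by
    intro A hA hcr
    by_cases hAX : A = X₀
    · subst hAX
      refine not_crossing_of_shared₂ ?_ hcr
      rcases hXuv with ⟨e1, e2⟩ | ⟨e1, e2⟩
      · exact Or.inr e2.symm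
      · exact Or.inl e1.symm
    · have hAY : A ∈ Y := hsub A hA hAX
      have hcore : crossing (⟨A.e1, A.e2⟩ : Arc n) ⟨u, v⟩ ∨
          crossing (⟨A.e1, A.e2⟩ : Arc n) ⟨p, q⟩ := by
        rcases hcr with ⟨c1, c2⟩ | ⟨c1, c2⟩
        · exact corePt2 A.e1 A.e2 p q u v c1 c2 h3 h4
        · rcases corePt2 A.e2 A.e1 p q u v c2 c1 h3 h4 with h | h
          · exact Or.inl ((crossing_swap₁ _ _ _).mpr h)
          · exact Or.inr ((crossing_swap₁ _ _ _).mpr h)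
      have hAeta : (⟨A.e1, A.e2⟩ : Arc n) = A := rfl
      rw [hAeta] at hcore
      rcases hcore with h | h
      · exact hT.2.1 A hA X₀ hX₀T ((crossing_congr₂ hXuv A).mpr h)
      · exact hYtri.2.1 A hAY Y₀ hY₀Y ((crossing_congr₂ hYpq A).mpr h)
  obtain ⟨C1, hC1T, hC1s⟩ := hT.2.2 ⟨p, u⟩ (valid_acc_arc hacc hup) nc1
  obtain ⟨C2, hC2T, hC2s⟩ := hT.2.2 ⟨p, v⟩ (valid_acc_arc hacc hvp) nc2
  have hne12 : ¬ sameArc C1 C2 := by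
    intro h
    have huv : u ≠ v := fun h' => notBothPt h3 (by rw [h']; exact h4)
    have h' := sameArc_trans (sameArc_trans (sameArc_symm hC1s) h) hC2s
    rcases h' with ⟨e1, e2⟩ | ⟨e1, e2⟩
    · exact huv e2
    · exact hvp e1.symm
  have hset1 := sameArc_pair_eq hC1s
  have hset2 := sameArc_pair_eq hC2s
  have hb2 : ¬ strictBtw u v p ∨ ¬ strictBtw v u p := by
    by_cases h : strictBtw u v p
    · exact Or.inr (fun h' => notBothPt h h')
    · exact Or.inl h
  rcases hb2 with hb | hb
  · exact hrig C2 hC2T C1 hC1T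
      (Or.inr (Or.inl ⟨hne12, p, u, v, hacc, hup, hvp, hset1, hset2, hb⟩))
  · exact hrig C1 hC1T C2 hC2T
      (Or.inr (Or.inl ⟨fun h => hne12 (sameArc_symm h), p, v, u, hacc, hvp, hup,
        hset2, hset1, hb⟩))

/-! Rigidity is preserved by mutation -/

lemma rigid_mut {n : ℕ} {T Y : Set (Arc n)} {X₀ Y₀ : Arc n}
    (hT : IsTriangulation T) (hYtri : IsTriangulation Y) (hX₀T : X₀ ∈ T)
    (hYX : ¬ sameArc Y₀ X₀) (hYeq : Y = (T \ {X₀}) ∪ {Y₀})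
    (hrig : RigidSet T) : RigidSet Y := by
  have hY₀Y : Y₀ ∈ Y := by rw [hYeq]; exact Set.mem_union_right _ rfl
  have hsub : ∀ A ∈ T, A ≠ X₀ → A ∈ Y := fun A hA hne => by
    rw [hYeq]; exact Set.mem_union_left _ ⟨hA, hne⟩
  have hmem : ∀ A, A ∈ Y → (A ∈ T ∧ A ≠ X₀) ∨ A = Y₀ := by
    intro A hA
    rw [hYeq] at hA
    simp only [Set.mem_union, Set.mem_diff, Set.mem_singleton_iff] at hA
    exact hA
  by_cases hCex : ∃ C ∈ T, sameArc C Y₀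
  · obtain ⟨C, hCT, hCs⟩ := hCex
    have hrepr : ∀ D ∈ Y, ∃ D' ∈ T, sameArc D D' := by
      intro D hD
      rcases hmem D hD with ⟨hDT, _⟩ | rfl
      · exact ⟨D, hDT, sameArc_refl D⟩
      · exact ⟨C, hCT, sameArc_symm hCs⟩
    intro A hA Cc hCc hex
    obtain ⟨A', hA'T, hAs⟩ := hrepr A hA
    obtain ⟨Cc', hCc'T, hCs'⟩ := hrepr Cc hCc
    exact hrig A' hA'T Cc' hCc'T (ext_of_sameArc hCs' hAs hex)
  · push_neg at hCex
    have hcr : crossing Y₀ X₀ := by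
      by_cases hex : ∃ A ∈ Y, crossing A X₀
      · obtain ⟨A, hAY, hcrA⟩ := hex
        rcases hmem A hAY with ⟨hAT, _⟩ | rfl
        · exact absurd hcrA (hT.2.1 A hAT X₀ hX₀T)
        · exact hcrA
      · push_neg at hex
        obtain ⟨C, hCY, hCs⟩ := hYtri.2.2 X₀ (hT.1 X₀ hX₀T) hex
        have hcrX : crossing X₀ Y₀ := by
          by_cases hex2 : ∃ A ∈ T, crossing A Y₀
          · obtain ⟨A, hAT, hcr2⟩ := hex2
            by_cases hAX : A = X₀
            · exact hAX ▸ hcr2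
            · exact absurd hcr2 (hYtri.2.1 A (hsub A hAT hAX) Y₀ hY₀Y)
          · push_neg at hex2
            obtain ⟨C', hC'T, hC's⟩ := hT.2.2 Y₀ (hYtri.1 Y₀ hY₀Y) hex2
            exact absurd hC's (hCex C' hC'T)
        exact absurd ((crossing_congr₁ hCs Y₀).mpr hcrX)
          (hYtri.2.1 C hCY Y₀ hY₀Y)
    have hkey : ∀ p' q' u' v' : Pt n, isAcc p' → strictBtw p' q' u' → strictBtw q' p' v' →
        sameArc Y₀ ⟨p', q'⟩ → sameArc X₀ ⟨u', v'⟩ → False :=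
      fun p' q' u' v' ha h3 h4 hy hx =>
        keyContr hT hYtri hrig hX₀T hY₀Y hsub ha h3 h4 hy hx
    have haccE : ¬ isAcc Y₀.e1 ∧ ¬ isAcc Y₀.e2 := by
      rcases hcr with ⟨s1, s2⟩ | ⟨s1, s2⟩
      · constructor
        · intro ha
          exact hkey Y₀.e1 Y₀.e2 X₀.e1 X₀.e2 ha s1 s2 (Or.inl ⟨rfl, rfl⟩) (Or.inl ⟨rfl, rfl⟩)
        · intro ha
          exact hkey Y₀.e2 Y₀.e1 X₀.e2 X₀.e1 ha s2 s1 (Or.inr ⟨rfl, rfl⟩) (Or.inr ⟨rfl, rfl⟩)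
      · constructor
        · intro ha
          exact hkey Y₀.e1 Y₀.e2 X₀.e2 X₀.e1 ha s1 s2 (Or.inl ⟨rfl, rfl⟩) (Or.inr ⟨rfl, rfl⟩)
        · intro ha
          exact hkey Y₀.e2 Y₀.e1 X₀.e1 X₀.e2 ha s2 s1 (Or.inr ⟨rfl, rfl⟩) (Or.inl ⟨rfl, rfl⟩)
    intro A hA Cc hCc hex
    rcases hmem A hA with ⟨hAT, hAX⟩ | hEqA
    · rcases hmem Cc hCc with ⟨hCcT, hCcX⟩ | hEqC
      · exact hrig A hAT Cc hCcT hex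
      · rw [hEqC] at hex
        rcases hex with h | ⟨hns, p, c0, a0, hpacc, _, _, hCset, _, _⟩ | ⟨hsa, _, _⟩
        · exact hYtri.2.1 Y₀ hY₀Y A (hsub A hAT hAX) h
        · have hp : p ∈ ({Y₀.e1, Y₀.e2} : Set (Pt n)) := by
            rw [hCset]; exact Set.mem_insert _ _
          simp only [Set.mem_insert_iff, Set.mem_singleton_iff] at hp
          rcases hp with h | h
          · exact haccE.1 (h ▸ hpacc)
          · exact haccE.2 (h ▸ hpacc)
        · exact hCex A hAT (sameArc_symm hsa)
    · rw [hEqA] at hex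
      rcases hmem Cc hCc with ⟨hCcT, hCcX⟩ | hEqC
      · rcases hex with h | ⟨hns, p, c0, a0, hpacc, _, _, _, hAset, _⟩ | ⟨hsa, k1, k2⟩
        · exact hYtri.2.1 Cc (hsub Cc hCcT hCcX) Y₀ hY₀Y h
        · have hp : p ∈ ({Y₀.e1, Y₀.e2} : Set (Pt n)) := by
            rw [hAset]; exact Set.mem_insert _ _
          simp only [Set.mem_insert_iff, Set.mem_singleton_iff] at hp
          rcases hp with h | h
          · exact haccE.1 (h ▸ hpacc)
          · exact haccE.2 (h ▸ hpacc)
        · exact haccE.1 k1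
      · rw [hEqC] at hex
        rcases hex with h | ⟨hns, _⟩ | ⟨_, k1, _⟩
        · exact hYtri.2.1 Y₀ hY₀Y Y₀ hY₀Y h
        · exact hns (sameArc_refl _)
        · exact haccE.1 k1

/-! Leapfrogs transfer backwards through mutation -/

lemma leap_mut {n : ℕ} {T Y : Set (Arc n)} {X₀ Y₀ : Arc n}
    (hmem : ∀ A, A ∈ Y → (A ∈ T ∧ A ≠ X₀) ∨ A = Y₀)
    (hl : IsInfiniteLeapfrog Y) : IsInfiniteLeapfrog T := by
  obtain ⟨I, hI, A, B, p1, p2, p3, p4, p5, p6, p7⟩ := hl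
  by_cases hocc : ∃ i ∈ I, A i = Y₀ ∨ B i = Y₀
  · obtain ⟨i₀, hi₀I, hi₀⟩ := hocc
    have main : ∀ (I' : Set ℤ) (k : ℤ),
        (I' = Set.univ ∨ I' = {i | i ≤ 0} ∨ I' = {i | 0 ≤ i}) →
        (∀ i ∈ I', i + k ∈ I) → (∀ i ∈ I', i + k ≠ i₀) → IsInfiniteLeapfrog T := by
      intro I' k hI'3 hmap hne
      have hmemT : ∀ i ∈ I', A (i + k) ∈ T ∧ B (i + k) ∈ T := by
        intro i hi
        obtain ⟨hAY, hBY⟩ := p1 (i + k) (hmap i hi)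
        constructor
        · rcases hmem _ hAY with ⟨h, _⟩ | hEq
          · exact h
          · exfalso
            rcases hi₀ with hY | hY
            · exact (p2 (i+k) (hmap i hi) i₀ hi₀I (hne i hi)).1
                (by rw [hEq, hY]; exact sameArc_refl _)
            · exact (p3 (i+k) (hmap i hi) i₀ hi₀I)
                (by rw [hEq, hY]; exact sameArc_refl _)
        · rcases hmem _ hBY with ⟨h, _⟩ | hEq
          · exact h
          · exfalso
            rcases hi₀ with hY | hY
            · exact (p3 i₀ hi₀I (i+k) (hmap i hi))
                (by rw [hEq, hY]; exact sameArc_refl _)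
            · exact (p2 (i+k) (hmap i hi) i₀ hi₀I (hne i hi)).2
                (by rw [hEq, hY]; exact sameArc_refl _)
      refine ⟨I', hI'3, fun i => A (i + k), fun i => B (i + k), hmemT, ?_, ?_, ?_, ?_, ?_, ?_⟩
      · intro i hi j hj hij
        exact p2 (i+k) (hmap i hi) (j+k) (hmap j hj) (by omega)
      · intro i hi j hj
        exact p3 (i+k) (hmap i hi) (j+k) (hmap j hj)
      · intro i hi j hj
        exact p4 (i+k) (hmap i hi) (j+k) (hmap j hj)
      · intro i hi
        exact p5 (i+k) (hmap i hi)
      · intro i hi him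
        have h1 : i + k - 1 ∈ I := by
          rw [show i + k - 1 = (i-1) + k by ring]; exact hmap _ him
        have h2 := p6 (i+k) (hmap i hi) h1
        show sharesEndpoint (A (i + k)) (B (i - 1 + k))
        rw [show i - 1 + k = i + k - 1 by ring]
        exact h2
      · obtain ⟨c, d, hcd⟩ := p7
        exact ⟨c, d, fun i hi => hcd (i+k) (hmap i hi)⟩
    rcases hI with hIu | hIl | hIr
    · exact main {i | 0 ≤ i} (i₀ + 1) (Or.inr (Or.inr rfl))
        (fun i _ => by rw [hIu]; trivial)
        (fun i hi => by simp only [Set.mem_setOf_eq] at hi; omega)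
    · have hi₀le : i₀ ≤ 0 := by rw [hIl] at hi₀I; exact hi₀I
      exact main {i | i ≤ 0} (i₀ - 1) (Or.inr (Or.inl rfl))
        (fun i hi => by rw [hIl]; simp only [Set.mem_setOf_eq] at *; omega)
        (fun i hi => by simp only [Set.mem_setOf_eq] at hi; omega)
    · have hi₀ge : 0 ≤ i₀ := by rw [hIr] at hi₀I; exact hi₀I
      exact main {i | 0 ≤ i} (i₀ + 1) (Or.inr (Or.inr rfl))
        (fun i hi => by rw [hIr]; simp only [Set.mem_setOf_eq] at *; omega)
        (fun i hi => by simp only [Set.mem_setOf_eq] at hi; omega)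
  · push_neg at hocc
    refine ⟨I, hI, A, B, ?_, p2, p3, p4, p5, p6, p7⟩
    intro i hi
    obtain ⟨hAY, hBY⟩ := p1 i hi
    constructor
    · rcases hmem _ hAY with ⟨h, _⟩ | hEq
      · exact h
      · exact absurd hEq (hocc i hi).1
    · rcases hmem _ hBY with ⟨h, _⟩ | hEq
      · exact h
      · exact absurd hEq (hocc i hi).2


theorem stmt16 {n : ℕ} (T Y : Set (PY.Arc n)) (X₀ : PY.Arc n)
    (hT : IsTriangulation T) (hmut : IsMutation T Y X₀) :
    (IsFanTriangulation T → IsFanTriangulation Y) ∧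
    (RigidSet T → RigidSet Y) := by
  obtain ⟨hX₀T, hYtri, Y₀, hY₀T, hYX, hYeq⟩ := hmut
  have hmem : ∀ A, A ∈ Y → (A ∈ T ∧ A ≠ X₀) ∨ A = Y₀ := by
    intro A hA
    rw [hYeq] at hA
    simp only [Set.mem_union, Set.mem_diff, Set.mem_singleton_iff] at hA
    exact hA
  constructor
  · rintro ⟨_, hnl⟩
    exact ⟨hYtri, fun hl => hnl (leap_mut hmem hl)⟩
  · exact rigid_mut hT hYtri hX₀T hYX hYeq
end
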